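/- arXiv:2412.02534 — 4 statements merged into one kernel-verified Lean document; each statement's English description precedes it below -/
import Mathlib

section
/- For all coprime integers h, k with k ≥ 1 odd and 0 ≤ h < k, the complex number ω_{h,k}/ω_{2h,k}^2 is not a negative real number (equivalently, since it has modulus 1, ω_{h,k}/ω_{2h,k}^2 ≠ −1). -/
open scoped Real
open MeasureTheory

noncomputable section

open Classical in
/-- The sawtooth function `((x))`. -/
def saw (x : ℝ) : ℝ := if ∃ m : ℤ, x = m then 0 else x - ⌊x⌋ - 1/2

/-- The Dedekind sum `s(h,k)`. -/
def dedekindS (h k : ℤ) : ℝ :=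
  ∑ μ ∈ Finset.range k.toNat, saw ((μ : ℝ) / (k : ℝ)) * saw ((h : ℝ) * (μ : ℝ) / (k : ℝ))

/-- The multiplier `ω_{h,k} = e^{π i s(h,k)}`. -/
def omegaHK (h k : ℤ) : ℂ := Complex.exp (Real.pi * Complex.I * dedekindS h k)

/-- The modified Bessel function of the first kind of integer order. -/
def besselI (m : ℤ) (x : ℝ) : ℝ :=
  (1 / Real.pi) * ∫ θ in (0:ℝ)..Real.pi, Real.cos (m * θ) * Real.exp (x * Real.cos θ)

/-- `X_k(n) = π √(24n+1) / (6 √2 k)`. -/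
def Xkn (k : ℤ) (n : ℕ) : ℝ := Real.pi * Real.sqrt (24 * n + 1) / (6 * Real.sqrt 2 * k)

/-- `s₁(n)`: the sum of reciprocals of parts over all partitions of `n` into distinct parts. -/
def s1 (n : ℕ) : ℝ := ∑ p ∈ Nat.Partition.distincts n, ((p.parts.map fun j => (1:ℝ) / j).sum)

def Rsum (g k : ℤ) : ℤ := ∑ μ ∈ Finset.Ico 1 k.toNat, (μ : ℤ) * ((g * μ) % k)


/-- modular inverse computation -/
lemma inv_emod_aux (a g k μ : ℤ) (hag : k ∣ a * g - 1) (h0 : 0 ≤ μ) (h1 : μ < k) :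
    (a * ((g * μ) % k)) % k = μ := by
  obtain ⟨c, hc⟩ := hag
  have e1 : a * ((g * μ) % k) = a * g * μ + k * (-(a * ((g*μ)/k))) := by
    rw [Int.emod_def]; ring
  rw [e1, Int.add_mul_emod_self_left]
  have e2 : a * g * μ = μ + k * (c * μ) := by
    have : a * g = 1 + k * c := by linarith [hc]
    rw [this]; ring
  rw [e2, Int.add_mul_emod_self_left, Int.emod_eq_of_lt h0 h1]

lemma emod_mem_aux (g k μ : ℤ) (hk : 1 ≤ k) (hcop : IsCoprime g k) (h0 : 1 ≤ μ) (h1 : μ < k) :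
    1 ≤ (g * μ) % k ∧ (g * μ) % k < k := by
  have hne : (g * μ) % k ≠ 0 := by
    intro hz
    have hdvd : k ∣ g * μ := Int.dvd_of_emod_eq_zero hz
    have : k ∣ μ := (hcop.symm).dvd_of_dvd_mul_left hdvd
    have := Int.le_of_dvd (by omega) this
    omega
  have := Int.emod_nonneg (g * μ) (show k ≠ 0 by omega)
  have := Int.emod_lt_of_pos (g * μ) (show 0 < k by omega)
  omega

/-- The bijection μ ↦ hμ mod k on [1, k). -/
lemma sum_emod_bij (h k : ℤ) (hk : 1 ≤ k) (hcop : IsCoprime h k) (F : ℤ → ℤ) :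
    ∑ μ ∈ Finset.Ico 1 k.toNat, F ((h * μ) % k) = ∑ μ ∈ Finset.Ico 1 k.toNat, F (μ : ℤ) := by
  obtain ⟨a, b, hab⟩ := hcop
  have hcoph : IsCoprime h k := ⟨a, b, hab⟩
  have hinv1 : k ∣ a * h - 1 := ⟨-b, by linarith [hab]⟩
  have hinv2 : k ∣ h * a - 1 := ⟨-b, by linarith [hab]⟩
  have hcopa : IsCoprime a k := ⟨h, b, by linarith [hab]⟩
  have hcast : ∀ μ : ℕ, μ ∈ Finset.Ico 1 k.toNat → 1 ≤ (μ:ℤ) ∧ (μ:ℤ) < k := by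
    intro μ hμ
    simp only [Finset.mem_Ico] at hμ
    omega
  refine Finset.sum_nbij' (fun μ => ((h * μ) % k).toNat) (fun ν => ((a * ν) % k).toNat)
    ?_ ?_ ?_ ?_ ?_
  · intro μ hμ
    obtain ⟨h1, h2⟩ := hcast μ hμ
    obtain ⟨m1, m2⟩ := emod_mem_aux h k μ hk hcoph h1 h2
    simp only [Finset.mem_Ico]; omega
  · intro ν hν
    obtain ⟨h1, h2⟩ := hcast ν hν
    obtain ⟨m1, m2⟩ := emod_mem_aux a k ν hk hcopa h1 h2
    simp only [Finset.mem_Ico]; omega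
  · intro μ hμ
    obtain ⟨h1, h2⟩ := hcast μ hμ
    obtain ⟨m1, m2⟩ := emod_mem_aux h k μ hk hcoph h1 h2
    have e : ((((h * μ) % k).toNat : ℤ)) = (h * μ) % k := Int.toNat_of_nonneg (by omega)
    show ((a * (((h * μ) % k).toNat : ℤ)) % k).toNat = μ
    rw [e, inv_emod_aux a h k μ hinv1 (by omega) h2]
    omega
  · intro ν hν
    obtain ⟨h1, h2⟩ := hcast ν hν
    obtain ⟨m1, m2⟩ := emod_mem_aux a k ν hk hcopa h1 h2
    have e : ((((a * ν) % k).toNat : ℤ)) = (a * ν) % k := Int.toNat_of_nonneg (by omega)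
    show ((h * (((a * ν) % k).toNat : ℤ)) % k).toNat = ν
    rw [e, inv_emod_aux h a k ν hinv2 (by omega) h2]
    omega
  · intro μ hμ
    obtain ⟨h1, h2⟩ := hcast μ hμ
    obtain ⟨m1, m2⟩ := emod_mem_aux h k μ hk hcoph h1 h2
    congr 1
    exact (Int.toNat_of_nonneg (by omega)).symm

lemma saw_int_div (a b : ℤ) (hb : 0 < b) (hr : a % b ≠ 0) :
    saw ((a : ℝ) / (b : ℝ)) = ((a % b : ℤ) : ℝ) / (b : ℝ) - 1/2 := by
  have hbR : (b : ℝ) ≠ 0 := by exact_mod_cast hb.ne'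
  have hdm : (b : ℝ) * ((a / b : ℤ) : ℝ) + ((a % b : ℤ) : ℝ) = (a : ℝ) := by
    exact_mod_cast congrArg (Int.cast : ℤ → ℝ) (Int.mul_ediv_add_emod a b)
  have hni : ¬∃ m : ℤ, (a : ℝ) / (b : ℝ) = (m : ℝ) := by
    rintro ⟨m, hm⟩
    apply hr
    have h1 : (a : ℝ) = (m : ℝ) * (b : ℝ) := by field_simp at hm; linarith [hm]
    have h2 : a = m * b := by exact_mod_cast h1
    simp [h2, Int.mul_emod_left]
  rw [saw, if_neg hni]
  have h0 : (0:ℝ) ≤ ((a % b : ℤ) : ℝ) / (b : ℝ) := by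
    apply div_nonneg _ (by exact_mod_cast hb.le)
    exact_mod_cast Int.emod_nonneg a hb.ne'
  have h1 : ((a % b : ℤ) : ℝ) / (b : ℝ) < 1 := by
    rw [div_lt_one (by exact_mod_cast hb)]
    exact_mod_cast Int.emod_lt_of_pos a hb
  have hsplit : (a : ℝ) / (b : ℝ) = ((a / b : ℤ) : ℝ) + ((a % b : ℤ) : ℝ) / (b : ℝ) := by
    field_simp
    linarith [hdm]
  rw [hsplit, Int.floor_intCast_add]
  have hz : ⌊((a % b : ℤ) : ℝ) / (b : ℝ)⌋ = 0 := Int.floor_eq_zero_iff.2 ⟨h0, h1⟩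
  rw [hz]
  push_cast
  ring

lemma saw_zero : saw 0 = 0 := by
  rw [saw, if_pos ⟨0, by simp⟩]

lemma gauss1' (n : ℕ) : (∑ μ ∈ Finset.range n, (μ:ℤ)) * 2 = n * (n - 1) := by
  induction n with
  | zero => simp
  | succ n ih =>
    rw [Finset.sum_range_succ]
    push_cast
    push_cast at ih
    linarith [ih]

lemma gauss2' (n : ℕ) : (∑ μ ∈ Finset.range n, (μ:ℤ)^2) * 6 = n * (n - 1) * (2*n - 1) := by
  induction n with
  | zero => simp
  | succ n ih =>
    rw [Finset.sum_range_succ]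
    push_cast
    push_cast at ih
    nlinarith [ih]

lemma gauss1 (n : ℕ) : (∑ μ ∈ Finset.Ico 1 n, (μ:ℤ)) * 2 = n * (n - 1) := by
  have h0 : ∑ μ ∈ Finset.Ico 1 n, (μ:ℤ) = ∑ μ ∈ Finset.range n, (μ:ℤ) :=
    Finset.sum_subset (by intro x hx; simp only [Finset.mem_Ico, Finset.mem_range] at *; omega)
      (by intro x hx hx2; simp only [Finset.mem_Ico, Finset.mem_range] at *;
          have : x = 0 := by omega
          simp [this])
  rw [h0]; exact gauss1' n

lemma gauss2 (n : ℕ) : (∑ μ ∈ Finset.Ico 1 n, (μ:ℤ)^2) * 6 = n * (n - 1) * (2*n - 1) := by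
  have h0 : ∑ μ ∈ Finset.Ico 1 n, (μ:ℤ)^2 = ∑ μ ∈ Finset.range n, (μ:ℤ)^2 :=
    Finset.sum_subset (by intro x hx; simp only [Finset.mem_Ico, Finset.mem_range] at *; omega)
      (by intro x hx hx2; simp only [Finset.mem_Ico, Finset.mem_range] at *;
          have : x = 0 := by omega
          simp [this])
  rw [h0]; exact gauss2' n

lemma ded_eq (g k : ℤ) (hk : 1 ≤ k) (hg : 0 ≤ g) (hcop : IsCoprime g k) :
    (4 * (k:ℝ)^2) * dedekindS g k = ((4 * Rsum g k - k^2*(k-1) : ℤ) : ℝ) := by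
  have hkR : (k:ℝ) ≠ 0 := by
    have : (0:ℝ) < k := by exact_mod_cast hk
    linarith
  have hkn : ((k.toNat : ℤ)) = k := Int.toNat_of_nonneg (by omega)
  -- Step A: drop μ = 0
  have hA : dedekindS g k
      = ∑ μ ∈ Finset.Ico 1 k.toNat, saw ((μ : ℝ) / (k : ℝ)) * saw ((g : ℝ) * (μ : ℝ) / (k : ℝ)) := by
    rw [dedekindS]
    refine (Finset.sum_subset ?_ ?_).symm
    · intro x hx; simp only [Finset.mem_Ico, Finset.mem_range] at *; omega
    · intro x hx hx2
      simp only [Finset.mem_Ico, Finset.mem_range] at *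
      have : x = 0 := by omega
      subst this
      simp [saw_zero]
  -- Step B: per-term evaluation
  have hB : (4 * (k:ℝ)^2) * dedekindS g k
      = ((∑ μ ∈ Finset.Ico 1 k.toNat, (2*(μ:ℤ) - k) * (2*((g*μ) % k) - k) : ℤ) : ℝ) := by
    rw [hA, Finset.mul_sum]
    rw [Int.cast_sum]
    refine Finset.sum_congr rfl ?_
    intro μ hμ
    simp only [Finset.mem_Ico] at hμ
    have h1 : (1:ℤ) ≤ (μ:ℤ) := by exact_mod_cast hμ.1
    have h2 : (μ:ℤ) < k := by omega
    have hs1 : saw ((μ : ℝ) / (k : ℝ)) = ((μ:ℤ) : ℝ)/(k:ℝ) - 1/2 := by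
      have := saw_int_div (μ:ℤ) k (by omega) (by rw [Int.emod_eq_of_lt (by omega) h2]; omega)
      rw [Int.emod_eq_of_lt (by omega) h2] at this
      simpa using this
    have hr := emod_mem_aux g k μ hk hcop h1 h2
    have hs2 : saw ((g : ℝ) * (μ : ℝ) / (k : ℝ)) = (((g*μ) % k : ℤ) : ℝ)/(k:ℝ) - 1/2 := by
      have := saw_int_div (g*μ) k (by omega) (by omega)
      have hcast : ((g*(μ:ℤ) : ℤ) : ℝ) = (g : ℝ) * (μ : ℝ) := by push_cast; ring
      rw [hcast] at this
      exact this
    rw [hs1, hs2]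
    push_cast
    field_simp
    ring
  rw [hB]
  -- Step C: integer identity
  congr 1
  have expand : ∀ μ ∈ Finset.Ico 1 k.toNat,
      (2*(μ:ℤ) - k) * (2*((g*μ) % k) - k)
        = 4*((μ:ℤ)*((g*μ) % k)) - 2*k*(μ:ℤ) - 2*k*((g*μ) % k) + k*k := by
    intro μ _; ring
  rw [Finset.sum_congr rfl expand]
  have hsplit : ∑ μ ∈ Finset.Ico 1 k.toNat,
      (4*((μ:ℤ)*((g*μ) % k)) - 2*k*(μ:ℤ) - 2*k*((g*μ) % k) + k*k)
      = 4*(∑ μ ∈ Finset.Ico 1 k.toNat, (μ:ℤ)*((g*μ) % k))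
        - 2*k*(∑ μ ∈ Finset.Ico 1 k.toNat, (μ:ℤ))
        - 2*k*(∑ μ ∈ Finset.Ico 1 k.toNat, ((g*μ) % k))
        + (k.toNat - 1 : ℕ) * (k*k) := by
    rw [Finset.sum_add_distrib, Finset.sum_sub_distrib, Finset.sum_sub_distrib,
      ← Finset.mul_sum, ← Finset.mul_sum, ← Finset.mul_sum, Finset.sum_const,
      Nat.card_Ico, nsmul_eq_mul]
  rw [hsplit]
  have hbij : (∑ μ ∈ Finset.Ico 1 k.toNat, ((g*μ) % k)) = ∑ μ ∈ Finset.Ico 1 k.toNat, (μ:ℤ) :=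
    sum_emod_bij g k hk hcop (fun x => x)
  rw [hbij]
  have hg1 := gauss1 k.toNat
  rw [hkn] at hg1
  have hcard : ((k.toNat - 1 : ℕ) : ℤ) = k - 1 := by omega
  rw [hcard, Rsum]
  linear_combination (-2*k) * hg1

def Tsum (h k : ℤ) : ℤ := ∑ μ ∈ Finset.Ico 1 k.toNat, (if k < 2*((h * μ) % k) then (μ:ℤ) else 0)
def Csum (h k : ℤ) : ℤ := ∑ μ ∈ Finset.Ico 1 k.toNat, ((h * μ) / k) * ((h * μ) % k)
def Dsum (h k : ℤ) : ℤ := ∑ μ ∈ Finset.Ico 1 k.toNat, ((h * μ) / k)^2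
def Qsum (k : ℤ) : ℤ := ∑ μ ∈ Finset.Ico 1 k.toNat, (μ:ℤ)^2
def Wsum (k : ℤ) : ℤ := ∑ μ ∈ Finset.Ico 1 k.toNat, (if k < 2*(μ:ℤ) then (μ:ℤ) else 0)


-- E1
lemma rel_e1 (h k : ℤ) (hk : 1 ≤ k) (hodd : Odd k) :
    Rsum (2*h) k = 2 * Rsum h k - k * Tsum h k := by
  have step : Rsum (2*h) k = ∑ μ ∈ Finset.Ico 1 k.toNat,
      (2*((μ:ℤ) * ((h*μ) % k)) - k * (if k < 2*((h * μ) % k) then (μ:ℤ) else 0)) := by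
    rw [Rsum]
    refine Finset.sum_congr rfl ?_
    intro μ hμ
    have hq := Int.mul_ediv_add_emod (h * (μ:ℤ)) k
    set q := (h * (μ:ℤ)) / k with hqdef
    set r := (h * (μ:ℤ)) % k with hrdef
    have hr0 : 0 ≤ r := Int.emod_nonneg _ (by omega)
    have hr1 : r < k := Int.emod_lt_of_pos _ (by omega)
    have key : ((2*h) * (μ:ℤ)) % k = 2*r - k * (if k < 2*r then 1 else 0) := by
      have e1 : (2*h) * (μ:ℤ) = 2*r + k*(2*q) := by linarith [hq]
      rw [e1, Int.add_mul_emod_self_left]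
      by_cases hc : k < 2*r
      · rw [if_pos hc]
        have h2 : (2*r) % k = ((2*r - k) + k*1) % k := by ring_nf
        rw [h2, Int.add_mul_emod_self_left, Int.emod_eq_of_lt (by omega) (by omega)]
        ring
      · rw [if_neg hc]
        have hne : 2*r ≠ k := by
          intro hcc
          obtain ⟨j, hj⟩ := hodd
          omega
        rw [Int.emod_eq_of_lt (by omega) (by omega)]
        ring
    rw [key]
    by_cases hc : k < 2*r
    · rw [if_pos hc, if_pos hc]; ring
    · rw [if_neg hc, if_neg hc]; ring
  rw [step, Finset.sum_sub_distrib, ← Finset.mul_sum, ← Finset.mul_sum, Rsum, Tsum]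

-- E2
lemma rel_e2 (h k : ℤ) (hk : 1 ≤ k) (hcop : IsCoprime h k) :
    h * Rsum h k = k * Csum h k + Qsum k := by
  have hbij : (∑ μ ∈ Finset.Ico 1 k.toNat, ((h*μ) % k)^2) = Qsum k :=
    sum_emod_bij h k hk hcop (fun x => x^2)
  have step : h * Rsum h k = ∑ μ ∈ Finset.Ico 1 k.toNat,
      (k * (((h*μ)/k) * ((h*μ) % k)) + ((h*μ) % k)^2) := by
    rw [Rsum, Finset.mul_sum]
    refine Finset.sum_congr rfl ?_
    intro μ hμ
    have hq := Int.mul_ediv_add_emod (h * μ) k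
    linear_combination (-((h * (μ:ℤ)) % k)) * hq
  rw [step, Finset.sum_add_distrib, ← Finset.mul_sum, hbij, Csum]

-- E3
lemma rel_e3 (h k : ℤ) (hk : 1 ≤ k) (hcop : IsCoprime h k) :
    h^2 * Qsum k = k^2 * Dsum h k + 2 * k * Csum h k + Qsum k := by
  have hbij : (∑ μ ∈ Finset.Ico 1 k.toNat, ((h*μ) % k)^2) = Qsum k :=
    sum_emod_bij h k hk hcop (fun x => x^2)
  have lhs : h^2 * Qsum k = ∑ μ ∈ Finset.Ico 1 k.toNat, (h*(μ:ℤ))^2 := by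
    rw [Qsum, Finset.mul_sum]
    refine Finset.sum_congr rfl ?_
    intro μ _; ring
  have step : ∑ μ ∈ Finset.Ico 1 k.toNat, (h*(μ:ℤ))^2 = ∑ μ ∈ Finset.Ico 1 k.toNat,
      (k^2 * ((h*μ)/k)^2 + 2*k*(((h*μ)/k) * ((h*μ) % k)) + ((h*μ) % k)^2) := by
    refine Finset.sum_congr rfl ?_
    intro μ hμ
    have hq := Int.mul_ediv_add_emod (h * μ) k
    linear_combination (-(h * (μ:ℤ) + k * ((h * (μ:ℤ))/k) + ((h * (μ:ℤ)) % k))) * hq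
  rw [lhs, step, Finset.sum_add_distrib, Finset.sum_add_distrib, ← Finset.mul_sum,
    ← Finset.mul_sum, hbij, Csum, Dsum]

-- E5
lemma rel_e5 (h k : ℤ) (hk : 1 ≤ k) (hcop : IsCoprime h k) :
    k ∣ h * Tsum h k - Wsum k := by
  have hbij : (∑ μ ∈ Finset.Ico 1 k.toNat,
      (if k < 2*((h*μ) % k) then ((h*μ) % k) else 0)) = Wsum k :=
    sum_emod_bij h k hk hcop (fun x => if k < 2*x then x else 0)
  rw [← hbij, Tsum, Finset.mul_sum, ← Finset.sum_sub_distrib]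
  refine Finset.dvd_sum ?_
  intro μ hμ
  have hq := Int.mul_ediv_add_emod (h * μ) k
  by_cases hc : k < 2*((h*μ) % k)
  · rw [if_pos hc, if_pos hc]
    exact ⟨(h*μ)/k, by linarith [hq]⟩
  · rw [if_neg hc, if_neg hc]
    exact ⟨0, by ring⟩

-- E6
lemma rel_e6 (k : ℤ) (hk : 1 ≤ k) (hodd : Odd k) :
    8 * Wsum k = (k-1)*(3*k-1) := by
  obtain ⟨j, hj⟩ := hodd
  have hj0 : 0 ≤ j := by omega
  set a := j.toNat with ha
  have hka : k.toNat = 2*a + 1 := by omega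
  have hfil : Finset.filter (fun μ : ℕ => k < 2*(μ:ℤ)) (Finset.Ico 1 k.toNat)
      = Finset.Ico (a+1) k.toNat := by
    ext x
    simp only [Finset.mem_filter, Finset.mem_Ico]
    constructor
    · rintro ⟨⟨h1, h2⟩, h3⟩
      refine ⟨?_, h2⟩
      omega
    · rintro ⟨h1, h2⟩
      refine ⟨⟨by omega, h2⟩, ?_⟩
      omega
  have : Wsum k = ∑ μ ∈ Finset.Ico (a+1) k.toNat, (μ:ℤ) := by
    rw [Wsum, ← Finset.sum_filter, hfil]
  rw [this]
  have hsub := Finset.sum_Ico_consecutive (fun μ : ℕ => (μ:ℤ))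
    (show 1 ≤ a+1 by omega) (show a+1 ≤ k.toNat by omega)
  have g1 := gauss1 k.toNat
  have g2 := gauss1 (a+1)
  have hc1 : ((k.toNat : ℕ) : ℤ) = k := by omega
  have hc2 : ((a+1 : ℕ) : ℤ) = j+1 := by omega
  rw [hc1] at g1
  rw [hc2] at g2
  have hkj : k = 2*j+1 := hj
  linear_combination 4*g1 - 4*g2 + (k+2*j+1)*hkj + 8*hsub

-- the key contradiction
lemma key_lemma (h k m : ℤ) (hk : 1 ≤ k) (hodd : Odd k) (hcop : IsCoprime h k) (hm : Odd m)
    (e0 : 4 * Rsum h k - 8 * Rsum (2*h) k + k^2*(k-1) = 4*k^2*m) : False := by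
  set A := Rsum h k with hA
  set B := Rsum (2*h) k with hB
  set T := Tsum h k with hT
  set C := Csum h k with hC
  set D := Dsum h k with hD
  set Q := Qsum k with hQ
  set W := Wsum k with hW
  have e1 : B = 2*A - k*T := rel_e1 h k hk hodd
  have e2 : h*A = k*C + Q := rel_e2 h k hk hcop
  have e3 : h^2*Q = k^2*D + 2*k*C + Q := rel_e3 h k hk hcop
  have e4 : Q * 6 = k*(k-1)*(2*k-1) := by
    have := gauss2 k.toNat
    have hc : ((k.toNat : ℕ) : ℤ) = k := by omega
    rw [hc] at this
    exact this
  obtain ⟨e, he⟩ := rel_e5 h k hk hcop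
  have e5 : h*T - W = k*e := he
  have e6 : 8*W = (k-1)*(3*k-1) := rel_e6 k hk hodd
  set X := 6*D + 3*k - 4 + 8*e + h*(k-1) - 4*h*m - (h^2+1)*(2*k-3) with hX
  have hmain : k * h^2 = k * (k * X) := by
    rw [hX]
    linear_combination (-h)*e0 + (-8*h)*e1 + (-12)*e2 + 6*e3 + (-(h^2+1))*e4 + (8*k)*e5 + k*e6
  have hcancel : h^2 = k * X := mul_left_cancel₀ (show k ≠ 0 by omega) hmain
  have hdvd : k ∣ h^2 := ⟨X, hcancel⟩
  have hunit : IsUnit k := (IsCoprime.pow_left hcop : IsCoprime (h^2) k).isUnit_of_dvd' hdvd dvd_rfl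
  have hk1 : k = 1 := by
    rcases Int.isUnit_iff.1 hunit with h1 | h1 <;> omega
  subst hk1
  have hA0 : A = 0 := by rw [hA, Rsum]; simp
  have hB0 : B = 0 := by rw [hB, Rsum]; simp
  rw [hA0, hB0] at e0
  obtain ⟨j, hj⟩ := hm
  omega

theorem stmt4 (h k : ℤ) (hk : 1 ≤ k) (hodd : Odd k) (hh : 0 ≤ h) (hhk : h < k)
    (hcop : IsCoprime h k) :
    ∀ r : ℝ, r < 0 → omegaHK h k / omegaHK (2 * h) k ^ 2 ≠ (r : ℂ) := by
  intro r hr heq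
  set t : ℝ := dedekindS h k - 2 * dedekindS (2*h) k with ht
  have hquot : omegaHK h k / omegaHK (2 * h) k ^ 2
      = Complex.exp ((Real.pi : ℂ) * Complex.I * (t : ℂ)) := by
    rw [omegaHK, omegaHK, sq, ← Complex.exp_add, ← Complex.exp_sub]
    congr 1
    rw [ht]
    push_cast
    ring
  have hre : ((Real.pi : ℂ) * Complex.I * (t : ℂ)).re = 0 := by
    simp [Complex.mul_re, Complex.mul_im]
  have habs : ‖omegaHK h k / omegaHK (2 * h) k ^ 2‖ = 1 := by
    rw [hquot, Complex.norm_exp, hre, Real.exp_zero]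
  have hrabs : |r| = 1 := by
    have hx := congrArg (fun z : ℂ => ‖z‖) heq
    rw [habs, Complex.norm_real, Real.norm_eq_abs] at hx
    linarith [hx]
  have hr1 : r = -1 := by
    rw [abs_of_neg hr] at hrabs
    linarith
  have hm1 : Complex.exp ((Real.pi : ℂ) * Complex.I * (t : ℂ)) = -1 := by
    rw [← hquot, heq, hr1]
    push_cast
    ring
  have hone : Complex.exp ((Real.pi : ℂ) * Complex.I * (t : ℂ) - (Real.pi : ℂ) * Complex.I) = 1 := by
    rw [Complex.exp_sub, hm1, Complex.exp_pi_mul_I]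
    norm_num
  obtain ⟨n, hn⟩ := Complex.exp_eq_one_iff.1 hone
  have hpine : (Real.pi : ℂ) * Complex.I ≠ 0 := by
    simp [Real.pi_ne_zero, Complex.I_ne_zero]
  have htt : (t : ℂ) = ((2*n+1 : ℤ) : ℂ) := by
    apply mul_left_cancel₀ hpine
    push_cast
    push_cast at hn
    linear_combination hn
  have htr : t = ((2*n+1 : ℤ) : ℝ) := by exact_mod_cast htt
  obtain ⟨j, hj⟩ := hodd
  have hcop2k : IsCoprime (2 : ℤ) k := ⟨-j, 1, by omega⟩
  have hcop2 : IsCoprime (2*h) k := IsCoprime.mul_left hcop2k hcop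
  have d1 := ded_eq h k hk hh hcop
  have d2 := ded_eq (2*h) k hk (by omega) hcop2
  have e0 : 4 * Rsum h k - 8 * Rsum (2*h) k + k^2*(k-1) = 4*k^2*(2*n+1) := by
    have hcast : ((4 * Rsum h k - 8 * Rsum (2*h) k + k^2*(k-1) : ℤ) : ℝ)
        = ((4*k^2*(2*n+1) : ℤ) : ℝ) := by
      push_cast
      push_cast at d1 d2 htr
      rw [ht] at htr
      linear_combination -d1 + 2*d2 + (4*(k:ℝ)^2)*htr
    exact_mod_cast hcast
  exact key_lemma h k (2*n+1) hk ⟨j, hj⟩ hcop ⟨n, by ring⟩ e0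
end
end

section
/- There exist constants C > 0 and x_0 > 0 such that for all real x ≥ x_0, | 𝕀(x) − √(π/2) · e^x · x^{−3/2} | ≤ C e^x x^{−5/2}. -/
open scoped Real

noncomputable section

open MeasureTheory Set Filter

lemma exp_diff_le {a b m : ℝ} (hab : a ≤ b) (ha : m ≤ a) :
    Real.exp (-a) - Real.exp (-b) ≤ (b - a) * Real.exp (-m) := by
  have h1 : Real.exp (-a) - Real.exp (-b) = Real.exp (-a) * (1 - Real.exp (a - b)) := by
    rw [mul_sub, mul_one, ← Real.exp_add]; ring_nf
  have h2 : 1 - Real.exp (a - b) ≤ b - a := by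
    have := Real.add_one_le_exp (a - b); linarith
  have h3 : 0 ≤ 1 - Real.exp (a - b) := by
    have : Real.exp (a - b) ≤ 1 := Real.exp_le_one_iff.2 (by linarith)
    linarith
  calc Real.exp (-a) - Real.exp (-b) = Real.exp (-a) * (1 - Real.exp (a - b)) := h1
    _ ≤ Real.exp (-m) * (b - a) :=
        mul_le_mul (Real.exp_le_exp.2 (by linarith)) h2 h3 (Real.exp_pos _).le
    _ = (b - a) * Real.exp (-m) := mul_comm _ _

lemma abs_exp_diff_le {a b m : ℝ} (ha : m ≤ a) (hb : m ≤ b) :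
    |Real.exp (-a) - Real.exp (-b)| ≤ |a - b| * Real.exp (-m) := by
  rcases le_total a b with h | h
  · rw [abs_of_nonneg (by have := Real.exp_le_exp.2 (neg_le_neg h); linarith),
      abs_of_nonpos (by linarith)]
    have := exp_diff_le h ha; linarith
  · rw [abs_of_nonpos (by have := Real.exp_le_exp.2 (neg_le_neg h); linarith),
      abs_of_nonneg (by linarith)]
    have := exp_diff_le h hb; linarith

lemma moment_integrable {b : ℝ} (hb : 0 < b) (n : ℕ) :
    IntegrableOn (fun θ : ℝ => θ ^ n * Real.exp (-b * θ ^ 2)) (Set.Ioi 0) := by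
  have h := integrable_rpow_mul_exp_neg_mul_sq hb (s := n)
    (lt_of_lt_of_le neg_one_lt_zero (Nat.cast_nonneg n))
  simp_rw [Real.rpow_natCast] at h
  exact h.integrableOn

lemma moment_value {b : ℝ} (hb : 0 < b) (n : ℕ) :
    ∫ θ in Set.Ioi (0:ℝ), θ ^ n * Real.exp (-b * θ ^ 2) =
      b ^ (-((n:ℝ) + 1) / 2) * (1 / 2) * Real.Gamma (((n:ℝ) + 1) / 2) := by
  have e : ∀ y : ℝ, y ^ (2:ℝ) = y ^ (2:ℕ) := fun y => by
    rw [show (2:ℝ) = ((2:ℕ):ℝ) by norm_num, Real.rpow_natCast]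
  have h := integral_rpow_mul_exp_neg_mul_rpow (p := 2) (q := n) (b := b) two_pos
    (lt_of_lt_of_le neg_one_lt_zero (Nat.cast_nonneg n)) hb
  simp_rw [e, Real.rpow_natCast] at h
  exact h

lemma sqrt_pi_le_two : Real.sqrt π ≤ 2 := by
  rw [show (2:ℝ) = Real.sqrt 4 by
    rw [show (4:ℝ) = 2^2 by norm_num, Real.sqrt_sq (by norm_num)]]
  exact Real.sqrt_le_sqrt Real.pi_le_four

lemma gamma_three_half : Real.Gamma ((3:ℝ)/2) = Real.sqrt π / 2 := by
  rw [show (3:ℝ)/2 = 1/2 + 1 by norm_num, Real.Gamma_add_one (by norm_num),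
    Real.Gamma_one_half_eq]
  ring

lemma gamma_five_half : Real.Gamma ((5:ℝ)/2) = 3/4 * Real.sqrt π := by
  rw [show (5:ℝ)/2 = 3/2 + 1 by norm_num, Real.Gamma_add_one (by norm_num), gamma_three_half]
  ring

lemma gamma_seven_half : Real.Gamma ((7:ℝ)/2) = 15/8 * Real.sqrt π := by
  rw [show (7:ℝ)/2 = 5/2 + 1 by norm_num, Real.Gamma_add_one (by norm_num), gamma_five_half]
  ring

lemma four_rpow_half (n : ℕ) : (4:ℝ) ^ (((n:ℝ)) / 2) = 2 ^ n := by
  rw [show (4:ℝ) = (2:ℝ) ^ (2:ℕ) by norm_num, ← Real.rpow_natCast (2:ℝ) 2,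
    ← Real.rpow_mul (by norm_num : (0:ℝ) ≤ 2),
    show ((2:ℕ):ℝ) * ((n:ℝ)/2) = ((n:ℕ):ℝ) by push_cast; ring, Real.rpow_natCast]

lemma quarter_rpow {x : ℝ} (hx : 0 < x) (n : ℕ) :
    (x/4) ^ (-((n:ℝ) + 1) / 2) = 2 ^ (n+1) * x ^ (-((n:ℝ) + 1) / 2) := by
  rw [show -((n:ℝ) + 1) / 2 = -(((n:ℝ)+1)/2) by ring, Real.div_rpow hx.le (by norm_num),
    Real.rpow_neg hx.le, Real.rpow_neg (by norm_num : (0:ℝ) ≤ 4),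
    show ((n:ℝ)+1)/2 = (((n+1:ℕ):ℝ))/2 by push_cast; ring, four_rpow_half]
  field_simp

/-- the exact leading-order integral -/
lemma leading_value {x : ℝ} (hx : 0 < x) :
    ∫ θ in Set.Ioi (0:ℝ), θ ^ 2 * Real.exp (-(x/2) * θ ^ 2) =
      Real.sqrt (π / 2) * x ^ (-(3:ℝ)/2) := by
  rw [moment_value (by positivity) 2]
  have h1 : (-(((2:ℕ):ℝ) + 1) / 2) = -(3:ℝ)/2 := by norm_num
  have h2 : ((((2:ℕ):ℝ)) + 1) / 2 = (3:ℝ)/2 := by norm_num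
  rw [h1, h2, gamma_three_half]
  have h3 : (x/2) ^ (-(3:ℝ)/2) = 2 ^ ((3:ℝ)/2) * x ^ (-(3:ℝ)/2) := by
    rw [show -(3:ℝ)/2 = -((3:ℝ)/2) by ring, Real.div_rpow hx.le (by norm_num),
      Real.rpow_neg hx.le, Real.rpow_neg (by norm_num : (0:ℝ) ≤ 2)]
    field_simp
  rw [h3]
  have h4 : (2:ℝ) ^ ((3:ℝ)/2) = 2 * Real.sqrt 2 := by
    rw [show (3:ℝ)/2 = 1 + 1/2 by norm_num, Real.rpow_add (by norm_num), Real.rpow_one,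
      ← Real.sqrt_eq_rpow]
  rw [h4]
  have h5 : Real.sqrt (π/2) = Real.sqrt π / Real.sqrt 2 := Real.sqrt_div Real.pi_pos.le 2
  have hs2 : (0:ℝ) < Real.sqrt 2 := Real.sqrt_pos.2 (by norm_num)
  have hs2' : Real.sqrt 2 * Real.sqrt 2 = 2 := Real.mul_self_sqrt (by norm_num)
  rw [h5]
  field_simp
  ring_nf
  rw [Real.sq_sqrt (by norm_num : (0:ℝ) ≤ 2)]

/-- The Bessel-type integral `𝕀(x) = ∫_0^π θ² cos θ e^{x cos θ} dθ`. -/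
def besselII (x : ℝ) : ℝ := ∫ θ in (0:ℝ)..Real.pi, θ ^ 2 * Real.cos θ * Real.exp (x * Real.cos θ)

lemma besselII_eq (x : ℝ) : besselII x =
    Real.exp x * ∫ θ in Set.Ioc (0:ℝ) π,
      θ ^ 2 * Real.cos θ * Real.exp (-x * (1 - Real.cos θ)) := by
  rw [besselII, intervalIntegral.integral_of_le Real.pi_pos.le, ← integral_const_mul]
  refine setIntegral_congr_fun measurableSet_Ioc fun θ _ => ?_
  rw [show Real.exp x * (θ^2 * Real.cos θ * Real.exp (-x * (1 - Real.cos θ)))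
      = θ^2 * Real.cos θ * (Real.exp x * Real.exp (-x * (1 - Real.cos θ))) by ring,
    ← Real.exp_add]
  congr 2
  ring

lemma moment_quarter_le {x : ℝ} (hx : 0 < x) (n : ℕ) {K : ℝ}
    (hK : (2:ℝ) ^ (n+1) * (1/2) * Real.Gamma (((n:ℝ) + 1)/2) ≤ K) :
    ∫ θ in Set.Ioi (0:ℝ), θ ^ n * Real.exp (-(x/4) * θ ^ 2) ≤ K * x ^ (-((n:ℝ) + 1) / 2) := by
  rw [moment_value (by positivity) n, quarter_rpow hx n]
  have hxp : (0:ℝ) ≤ x ^ (-((n:ℝ) + 1) / 2) := (Real.rpow_pos_of_pos hx _).le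
  calc (2:ℝ) ^ (n+1) * x ^ (-((n:ℝ) + 1) / 2) * (1/2) * Real.Gamma (((n:ℝ) + 1)/2)
      = ((2:ℝ) ^ (n+1) * (1/2) * Real.Gamma (((n:ℝ) + 1)/2)) * x ^ (-((n:ℝ) + 1) / 2) := by ring
    _ ≤ K * x ^ (-((n:ℝ) + 1) / 2) := mul_le_mul_of_nonneg_right hK hxp

/-- pointwise comparison on (0,1] -/
lemma pointwise_bound {x θ : ℝ} (hx : 0 ≤ x) (hθ : θ ∈ Set.Ioc (0:ℝ) 1) :
    |θ^2 * Real.cos θ * Real.exp (-x * (1 - Real.cos θ)) - θ^2 * Real.exp (-(x/2) * θ^2)| ≤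
      θ^4 * Real.exp (-(x/4) * θ^2) + 5/96 * x * (θ^6 * Real.exp (-(x/4) * θ^2)) := by
  obtain ⟨hθ0, hθ1⟩ := hθ
  have habs : |θ| ≤ 1 := by rw [abs_of_pos hθ0]; exact hθ1
  have hcb := Real.cos_bound habs
  rw [abs_of_pos hθ0] at hcb
  rw [abs_le] at hcb
  obtain ⟨cb2, cb1⟩ := hcb
  have h21 : θ^2 ≤ 1 := by nlinarith
  have hθ2 : θ^4 ≤ θ^2 := by nlinarith [mul_le_mul_of_nonneg_left h21 (sq_nonneg θ)]
  have hf4 : θ^2/4 ≤ 1 - Real.cos θ := by nlinarith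
  have hfm : x/4 * θ^2 ≤ x * (1 - Real.cos θ) := by nlinarith
  have hgm : x/4 * θ^2 ≤ x/2 * θ^2 := by nlinarith
  have E4pos : (0:ℝ) < Real.exp (-(x/4) * θ^2) := Real.exp_pos _
  have key1 : Real.exp (-x * (1 - Real.cos θ)) ≤ Real.exp (-(x/4) * θ^2) :=
    Real.exp_le_exp.2 (by nlinarith)
  have key2 : |Real.exp (-(x * (1 - Real.cos θ))) - Real.exp (-(x/2 * θ^2))| ≤
      |x * (1 - Real.cos θ) - x/2 * θ^2| * Real.exp (-(x/4 * θ^2)) :=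
    abs_exp_diff_le hfm hgm
  have key3 : |x * (1 - Real.cos θ) - x/2 * θ^2| ≤ x * (5/96 * θ^4) := by
    rw [show x * (1 - Real.cos θ) - x/2 * θ^2 = x * ((1 - Real.cos θ) - θ^2/2) by ring,
      abs_mul, abs_of_nonneg hx]
    have : |(1 - Real.cos θ) - θ^2/2| ≤ 5/96 * θ^4 := by
      rw [abs_le]; constructor <;> nlinarith
    exact mul_le_mul_of_nonneg_left this hx
  have hcos1 : |Real.cos θ - 1| ≤ θ^2 := by
    rw [abs_le]
    have := Real.cos_le_one θ
    constructor <;> nlinarith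
  have decomp : θ^2 * Real.cos θ * Real.exp (-x * (1 - Real.cos θ)) - θ^2 * Real.exp (-(x/2) * θ^2)
      = θ^2 * (Real.cos θ - 1) * Real.exp (-x * (1 - Real.cos θ))
        + θ^2 * (Real.exp (-(x * (1 - Real.cos θ))) - Real.exp (-(x/2 * θ^2))) := by
    rw [show -(x * (1 - Real.cos θ)) = -x * (1 - Real.cos θ) by ring,
      show -(x/2 * θ^2) = -(x/2) * θ^2 by ring]
    ring
  rw [decomp]
  refine (abs_add_le _ _).trans ?_
  have t1 : |θ^2 * (Real.cos θ - 1) * Real.exp (-x * (1 - Real.cos θ))| ≤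
      θ^4 * Real.exp (-(x/4) * θ^2) := by
    rw [abs_mul, abs_mul, abs_of_nonneg (by positivity : (0:ℝ) ≤ θ^2),
      abs_of_pos (Real.exp_pos _)]
    calc θ^2 * |Real.cos θ - 1| * Real.exp (-x * (1 - Real.cos θ))
        ≤ θ^2 * θ^2 * Real.exp (-(x/4) * θ^2) := by
          apply mul_le_mul (mul_le_mul_of_nonneg_left hcos1 (by positivity)) key1
            (Real.exp_pos _).le (by positivity)
      _ = θ^4 * Real.exp (-(x/4) * θ^2) := by ring
  have t2 : |θ^2 * (Real.exp (-(x * (1 - Real.cos θ))) - Real.exp (-(x/2 * θ^2)))| ≤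
      5/96 * x * (θ^6 * Real.exp (-(x/4) * θ^2)) := by
    rw [abs_mul, abs_of_nonneg (by positivity : (0:ℝ) ≤ θ^2)]
    calc θ^2 * |Real.exp (-(x * (1 - Real.cos θ))) - Real.exp (-(x/2 * θ^2))|
        ≤ θ^2 * (x * (5/96 * θ^4) * Real.exp (-(x/4 * θ^2))) := by
          refine mul_le_mul_of_nonneg_left (key2.trans ?_) (by positivity)
          exact mul_le_mul_of_nonneg_right key3 (Real.exp_pos _).le
      _ = 5/96 * x * (θ^6 * Real.exp (-(x/4) * θ^2)) := by ring_nf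
  linarith

/-- pointwise bound on (1, π] -/
lemma tail_bound {x θ : ℝ} (hx : 0 ≤ x) (hθ : θ ∈ Set.Ioc (1:ℝ) π) :
    |θ^2 * Real.cos θ * Real.exp (-x * (1 - Real.cos θ))| ≤ π^2 * Real.exp (-(x/4)) := by
  obtain ⟨hθ1, hθπ⟩ := hθ
  have hθ0 : (0:ℝ) < θ := lt_trans one_pos hθ1
  have hcos : Real.cos θ ≤ 2/3 := by
    have h1 : Real.cos θ ≤ Real.cos 1 :=
      Real.cos_le_cos_of_nonneg_of_le_pi zero_le_one hθπ hθ1.le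
    exact h1.trans (Real.cos_one_le.trans (by norm_num))
  have hexp : Real.exp (-x * (1 - Real.cos θ)) ≤ Real.exp (-(x/4)) :=
    Real.exp_le_exp.2 (by nlinarith)
  rw [abs_mul, abs_mul, abs_of_nonneg (by positivity : (0:ℝ) ≤ θ^2),
    abs_of_pos (Real.exp_pos _)]
  have h1 : θ^2 ≤ π^2 := by nlinarith
  have h2 : |Real.cos θ| ≤ 1 := Real.abs_cos_le_one θ
  calc θ^2 * |Real.cos θ| * Real.exp (-x * (1 - Real.cos θ))
      ≤ π^2 * 1 * Real.exp (-(x/4)) := by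
        apply mul_le_mul (mul_le_mul h1 h2 (abs_nonneg _) (by positivity)) hexp
          (Real.exp_pos _).le (by positivity)
    _ = π^2 * Real.exp (-(x/4)) := by ring

/-- pointwise bound on (1, ∞) for the gaussian tail -/
lemma gauss_tail_bound {x θ : ℝ} (hx : 0 ≤ x) (hθ : θ ∈ Set.Ioi (1:ℝ)) :
    θ^2 * Real.exp (-(x/2) * θ^2) ≤ Real.exp (-(x/4)) * (θ^2 * Real.exp (-(x/4) * θ^2)) := by
  have hθ1 : (1:ℝ) < θ := hθ
  have hsq : (1:ℝ) ≤ θ^2 := by nlinarith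
  have : -(x/2) * θ^2 = (-(x/4) * θ^2) + (-(x/4) * θ^2) := by ring
  rw [this, Real.exp_add]
  calc θ^2 * (Real.exp (-(x/4) * θ^2) * Real.exp (-(x/4) * θ^2))
      = (θ^2 * Real.exp (-(x/4) * θ^2)) * Real.exp (-(x/4) * θ^2) := by ring
    _ ≤ (θ^2 * Real.exp (-(x/4) * θ^2)) * Real.exp (-(x/4)) := by
        refine mul_le_mul_of_nonneg_left (Real.exp_le_exp.2 (by nlinarith [hsq])) (by positivity)
    _ = Real.exp (-(x/4)) * (θ^2 * Real.exp (-(x/4) * θ^2)) := mul_comm _ _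

lemma moment_quarter_le' {x : ℝ} (hx : 0 < x) (n : ℕ) {K r : ℝ}
    (hr : -((n:ℝ) + 1) / 2 = r)
    (hK : (2:ℝ) ^ (n+1) * (1/2) * Real.Gamma (((n:ℝ) + 1)/2) ≤ K) :
    ∫ θ in Set.Ioi (0:ℝ), θ ^ n * Real.exp (-(x/4) * θ ^ 2) ≤ K * x ^ r := by
  rw [← hr]; exact moment_quarter_le hx n hK

set_option maxHeartbeats 1600000 in
theorem stmt6 : ∃ C : ℝ, 0 < C ∧ ∃ x₀ : ℝ, 0 < x₀ ∧ ∀ x : ℝ, x₀ ≤ x →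
    |besselII x - Real.sqrt (Real.pi / 2) * Real.exp x * x ^ (-(3:ℝ)/2)| ≤
      C * Real.exp x * x ^ (-(5:ℝ)/2) := by
  refine ⟨200, by norm_num, ?_⟩
  have hev : ∀ᶠ y : ℝ in atTop, y ^ ((5:ℝ)/2) * Real.exp (-(1/4) * y) ≤ 1 :=
    (tendsto_rpow_mul_exp_neg_mul_atTop_nhds_zero ((5:ℝ)/2) (1/4) (by norm_num)).eventually
      (eventually_le_nhds one_pos)
  obtain ⟨y₀, hy₀⟩ := eventually_atTop.1 hev
  refine ⟨max y₀ 1, lt_of_lt_of_le one_pos (le_max_right _ _), fun x hx => ?_⟩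
  have hx1 : (1:ℝ) ≤ x := le_trans (le_max_right _ _) hx
  have hx0 : (0:ℝ) < x := lt_of_lt_of_le one_pos hx1
  have hxnn : (0:ℝ) ≤ x := hx0.le
  -- exponential is eventually smaller than the power
  have hexp : Real.exp (-(x/4)) ≤ x ^ (-(5:ℝ)/2) := by
    have h1 := hy₀ x (le_trans (le_max_left _ _) hx)
    have hp : (0:ℝ) < x ^ ((5:ℝ)/2) := Real.rpow_pos_of_pos hx0 _
    have h2 : x ^ (-(5:ℝ)/2) = (x ^ ((5:ℝ)/2))⁻¹ := by
      rw [show -(5:ℝ)/2 = -((5:ℝ)/2) by ring, Real.rpow_neg hxnn]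
    rw [h2, show -(x/4) = -(1/4) * x by ring]
    nlinarith [mul_inv_cancel₀ hp.ne', Real.exp_pos (-(1/4) * x)]
  have hr5 : (0:ℝ) ≤ x ^ (-(5:ℝ)/2) := (Real.rpow_pos_of_pos hx0 _).le
  -- integrability facts
  have hcg : Continuous (fun θ : ℝ => θ^2 * Real.cos θ * Real.exp (-x * (1 - Real.cos θ))) := by
    fun_prop
  have hgI1 : IntegrableOn (fun θ : ℝ => θ^2 * Real.cos θ * Real.exp (-x * (1 - Real.cos θ)))
      (Set.Ioc 0 1) := hcg.integrableOn_Ioc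
  have hgI2 : IntegrableOn (fun θ : ℝ => θ^2 * Real.cos θ * Real.exp (-x * (1 - Real.cos θ)))
      (Set.Ioc 1 π) := hcg.integrableOn_Ioc
  have hhI : IntegrableOn (fun θ : ℝ => θ^2 * Real.exp (-(x/2) * θ^2)) (Set.Ioi 0) :=
    moment_integrable (by positivity) 2
  have hhI1 : IntegrableOn (fun θ : ℝ => θ^2 * Real.exp (-(x/2) * θ^2)) (Set.Ioc 0 1) :=
    hhI.mono_set Set.Ioc_subset_Ioi_self
  have hhIt : IntegrableOn (fun θ : ℝ => θ^2 * Real.exp (-(x/2) * θ^2)) (Set.Ioi 1) :=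
    hhI.mono_set (Set.Ioi_subset_Ioi zero_le_one)
  have h4I : IntegrableOn (fun θ : ℝ => θ^4 * Real.exp (-(x/4) * θ^2)) (Set.Ioi 0) :=
    moment_integrable (by positivity) 4
  have h6I : IntegrableOn (fun θ : ℝ => θ^6 * Real.exp (-(x/4) * θ^2)) (Set.Ioi 0) :=
    moment_integrable (by positivity) 6
  have h2qI : IntegrableOn (fun θ : ℝ => θ^2 * Real.exp (-(x/4) * θ^2)) (Set.Ioi 0) :=
    moment_integrable (by positivity) 2
  have hBI : IntegrableOn (fun θ : ℝ => θ^4 * Real.exp (-(x/4) * θ^2)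
      + 5/96 * x * (θ^6 * Real.exp (-(x/4) * θ^2))) (Set.Ioi 0) :=
    h4I.add (h6I.const_mul (5/96 * x))
  have h1pi : (1:ℝ) ≤ π := by linarith [Real.pi_gt_three]
  -- splits
  have hsplitK : (∫ θ in Set.Ioi (0:ℝ), θ^2 * Real.exp (-(x/2) * θ^2))
      = (∫ θ in Set.Ioc (0:ℝ) 1, θ^2 * Real.exp (-(x/2) * θ^2))
        + ∫ θ in Set.Ioi (1:ℝ), θ^2 * Real.exp (-(x/2) * θ^2) := by
    rw [← Set.Ioc_union_Ioi_eq_Ioi (zero_le_one (α := ℝ)),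
      setIntegral_union Set.Ioc_disjoint_Ioi_same measurableSet_Ioi hhI1 hhIt]
  have hsplitJ : (∫ θ in Set.Ioc (0:ℝ) π, θ^2 * Real.cos θ * Real.exp (-x * (1 - Real.cos θ)))
      = (∫ θ in Set.Ioc (0:ℝ) 1, θ^2 * Real.cos θ * Real.exp (-x * (1 - Real.cos θ)))
        + ∫ θ in Set.Ioc (1:ℝ) π, θ^2 * Real.cos θ * Real.exp (-x * (1 - Real.cos θ)) := by
    rw [← Set.Ioc_union_Ioc_eq_Ioc (zero_le_one (α := ℝ)) h1pi,
      setIntegral_union (Set.Ioc_disjoint_Ioc_of_le le_rfl) measurableSet_Ioc hgI1 hgI2]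
  -- E1 : central region
  have hM4 : (∫ θ in Set.Ioi (0:ℝ), θ^4 * Real.exp (-(x/4) * θ^2)) ≤ 24 * x ^ (-(5:ℝ)/2) :=
    moment_quarter_le' hx0 4 (by norm_num) (by
      push_cast
      rw [show ((4:ℝ)+1)/2 = (5:ℝ)/2 by norm_num, gamma_five_half]
      nlinarith [sqrt_pi_le_two, Real.sqrt_nonneg π])
  have hM6 : (∫ θ in Set.Ioi (0:ℝ), θ^6 * Real.exp (-(x/4) * θ^2)) ≤ 240 * x ^ (-(7:ℝ)/2) :=
    moment_quarter_le' hx0 6 (by norm_num) (by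
      push_cast
      rw [show ((6:ℝ)+1)/2 = (7:ℝ)/2 by norm_num, gamma_seven_half]
      nlinarith [sqrt_pi_le_two, Real.sqrt_nonneg π])
  have hM2 : (∫ θ in Set.Ioi (0:ℝ), θ^2 * Real.exp (-(x/4) * θ^2)) ≤ 4 * x ^ (-(3:ℝ)/2) :=
    moment_quarter_le' hx0 2 (by norm_num) (by
      push_cast
      rw [show ((2:ℝ)+1)/2 = (3:ℝ)/2 by norm_num, gamma_three_half]
      nlinarith [sqrt_pi_le_two, Real.sqrt_nonneg π])
  have hpow75 : x * x ^ (-(7:ℝ)/2) = x ^ (-(5:ℝ)/2) := by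
    rw [show x * x ^ (-(7:ℝ)/2) = x ^ (1:ℝ) * x ^ (-(7:ℝ)/2) by rw [Real.rpow_one],
      ← Real.rpow_add hx0]
    congr 1
    ring
  have hE1 : |(∫ θ in Set.Ioc (0:ℝ) 1, θ^2 * Real.cos θ * Real.exp (-x * (1 - Real.cos θ)))
      - ∫ θ in Set.Ioc (0:ℝ) 1, θ^2 * Real.exp (-(x/2) * θ^2)| ≤ 37 * x ^ (-(5:ℝ)/2) := by
    rw [← integral_sub hgI1 hhI1]
    have step1 : |∫ θ in Set.Ioc (0:ℝ) 1, (θ^2 * Real.cos θ * Real.exp (-x * (1 - Real.cos θ))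
        - θ^2 * Real.exp (-(x/2) * θ^2))| ≤ ∫ θ in Set.Ioc (0:ℝ) 1,
        |θ^2 * Real.cos θ * Real.exp (-x * (1 - Real.cos θ)) - θ^2 * Real.exp (-(x/2) * θ^2)| := by
      rw [← Real.norm_eq_abs]
      refine (norm_integral_le_integral_norm _).trans_eq ?_
      simp [Real.norm_eq_abs]
    refine step1.trans ?_
    have step2 : (∫ θ in Set.Ioc (0:ℝ) 1,
        |θ^2 * Real.cos θ * Real.exp (-x * (1 - Real.cos θ)) - θ^2 * Real.exp (-(x/2) * θ^2)|)
        ≤ ∫ θ in Set.Ioc (0:ℝ) 1, (θ^4 * Real.exp (-(x/4) * θ^2)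
          + 5/96 * x * (θ^6 * Real.exp (-(x/4) * θ^2))) :=
      setIntegral_mono_on (hgI1.sub hhI1).abs (hBI.mono_set Set.Ioc_subset_Ioi_self)
        measurableSet_Ioc (fun θ hθ => pointwise_bound hxnn hθ)
    refine step2.trans ?_
    have step3 : (∫ θ in Set.Ioc (0:ℝ) 1, (θ^4 * Real.exp (-(x/4) * θ^2)
        + 5/96 * x * (θ^6 * Real.exp (-(x/4) * θ^2))))
        ≤ ∫ θ in Set.Ioi (0:ℝ), (θ^4 * Real.exp (-(x/4) * θ^2)
          + 5/96 * x * (θ^6 * Real.exp (-(x/4) * θ^2))) :=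
      setIntegral_mono_set hBI (Filter.Eventually.of_forall (fun θ => by positivity))
        (HasSubset.Subset.eventuallyLE Set.Ioc_subset_Ioi_self)
    refine step3.trans ?_
    rw [integral_add h4I (h6I.const_mul (5/96 * x)), integral_const_mul]
    have h6' : 5/96 * x * (∫ θ in Set.Ioi (0:ℝ), θ^6 * Real.exp (-(x/4) * θ^2))
        ≤ 5/96 * x * (240 * x ^ (-(7:ℝ)/2)) :=
      mul_le_mul_of_nonneg_left hM6 (by positivity)
    have h6'' : 5/96 * x * (240 * x ^ (-(7:ℝ)/2)) = 25/2 * x ^ (-(5:ℝ)/2) := by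
      rw [show 5/96 * x * (240 * x ^ (-(7:ℝ)/2)) = 25/2 * (x * x ^ (-(7:ℝ)/2)) by ring, hpow75]
    linarith [hM4]
  -- E2 : outer region of J
  have hE2 : |∫ θ in Set.Ioc (1:ℝ) π, θ^2 * Real.cos θ * Real.exp (-x * (1 - Real.cos θ))|
      ≤ 64 * Real.exp (-(x/4)) := by
    have hvol : volume (Set.Ioc (1:ℝ) π) < ⊤ := by
      rw [Real.volume_Ioc]; exact ENNReal.ofReal_lt_top
    have hb := norm_setIntegral_le_of_norm_le_const (μ := volume) hvol
      (C := π^2 * Real.exp (-(x/4)))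
      (fun θ hθ => by rw [Real.norm_eq_abs]; exact tail_bound hxnn hθ)
    rw [Real.norm_eq_abs, measureReal_def, Real.volume_Ioc, ENNReal.toReal_ofReal (by linarith)] at hb
    refine hb.trans ?_
    have hpl : π ≤ 4 := Real.pi_le_four
    have hcube : π^2 * (π - 1) ≤ 64 := by nlinarith [Real.pi_pos]
    calc π^2 * Real.exp (-(x/4)) * (π - 1) = (π^2 * (π - 1)) * Real.exp (-(x/4)) := by ring
      _ ≤ 64 * Real.exp (-(x/4)) := mul_le_mul_of_nonneg_right hcube (Real.exp_pos _).le
  -- E3 : gaussian tail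
  have hK3nn : (0:ℝ) ≤ ∫ θ in Set.Ioi (1:ℝ), θ^2 * Real.exp (-(x/2) * θ^2) :=
    setIntegral_nonneg measurableSet_Ioi (fun θ _ => by positivity)
  have hE3 : (∫ θ in Set.Ioi (1:ℝ), θ^2 * Real.exp (-(x/2) * θ^2)) ≤ 4 * Real.exp (-(x/4)) := by
    have hcI : IntegrableOn (fun θ : ℝ => Real.exp (-(x/4)) * (θ^2 * Real.exp (-(x/4) * θ^2)))
        (Set.Ioi 1) := by
      have h' := h2qI.mono_set (Set.Ioi_subset_Ioi (zero_le_one (α := ℝ)))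
      exact h'.const_mul _
    have s1 : (∫ θ in Set.Ioi (1:ℝ), θ^2 * Real.exp (-(x/2) * θ^2))
        ≤ ∫ θ in Set.Ioi (1:ℝ), Real.exp (-(x/4)) * (θ^2 * Real.exp (-(x/4) * θ^2)) :=
      setIntegral_mono_on hhIt hcI measurableSet_Ioi (fun θ hθ => gauss_tail_bound hxnn hθ)
    refine s1.trans ?_
    rw [integral_const_mul]
    have s3 : (∫ θ in Set.Ioi (1:ℝ), θ^2 * Real.exp (-(x/4) * θ^2))
        ≤ ∫ θ in Set.Ioi (0:ℝ), θ^2 * Real.exp (-(x/4) * θ^2) :=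
      setIntegral_mono_set h2qI (Filter.Eventually.of_forall (fun θ => by positivity))
        (HasSubset.Subset.eventuallyLE (Set.Ioi_subset_Ioi zero_le_one))
    have s5 : x ^ (-(3:ℝ)/2) ≤ 1 := Real.rpow_le_one_of_one_le_of_nonpos hx1 (by norm_num)
    have s6 : (∫ θ in Set.Ioi (1:ℝ), θ^2 * Real.exp (-(x/4) * θ^2)) ≤ 4 := by
      refine (s3.trans hM2).trans ?_
      nlinarith
    calc Real.exp (-(x/4)) * (∫ θ in Set.Ioi (1:ℝ), θ^2 * Real.exp (-(x/4) * θ^2))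
        ≤ Real.exp (-(x/4)) * 4 := by
          refine mul_le_mul_of_nonneg_left s6 (Real.exp_pos _).le
      _ = 4 * Real.exp (-(x/4)) := mul_comm _ _
  -- key estimate
  have hKval : (∫ θ in Set.Ioi (0:ℝ), θ^2 * Real.exp (-(x/2) * θ^2))
      = Real.sqrt (π / 2) * x ^ (-(3:ℝ)/2) := leading_value hx0
  have hkey : |(∫ θ in Set.Ioc (0:ℝ) π, θ^2 * Real.cos θ * Real.exp (-x * (1 - Real.cos θ)))
      - ∫ θ in Set.Ioi (0:ℝ), θ^2 * Real.exp (-(x/2) * θ^2)| ≤ 200 * x ^ (-(5:ℝ)/2) := by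
    rw [hsplitJ, hsplitK]
    set J1 := ∫ θ in Set.Ioc (0:ℝ) 1, θ^2 * Real.cos θ * Real.exp (-x * (1 - Real.cos θ)) with hJ1
    set J2 := ∫ θ in Set.Ioc (1:ℝ) π, θ^2 * Real.cos θ * Real.exp (-x * (1 - Real.cos θ)) with hJ2
    set K1 := ∫ θ in Set.Ioc (0:ℝ) 1, θ^2 * Real.exp (-(x/2) * θ^2) with hK1
    set K3 := ∫ θ in Set.Ioi (1:ℝ), θ^2 * Real.exp (-(x/2) * θ^2) with hK3
    have e : (J1 + J2) - (K1 + K3) = ((J1 - K1) + J2) + (-K3) := by ring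
    rw [e]
    have habs : |((J1 - K1) + J2) + (-K3)| ≤ |J1 - K1| + |J2| + |K3| :=
      (abs_add_le _ _).trans (by rw [abs_neg]; exact add_le_add_left (abs_add_le _ _) _)
    have hK3abs : |K3| = K3 := abs_of_nonneg hK3nn
    rw [hK3abs] at habs
    refine habs.trans ?_
    linarith [hE1, hE2, hE3, hexp, hr5]
  -- conclusion
  rw [besselII_eq]
  have heq : Real.exp x * (∫ θ in Set.Ioc (0:ℝ) π,
        θ^2 * Real.cos θ * Real.exp (-x * (1 - Real.cos θ)))
      - Real.sqrt (π / 2) * Real.exp x * x ^ (-(3:ℝ)/2)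
      = Real.exp x * ((∫ θ in Set.Ioc (0:ℝ) π, θ^2 * Real.cos θ * Real.exp (-x * (1 - Real.cos θ)))
        - ∫ θ in Set.Ioi (0:ℝ), θ^2 * Real.exp (-(x/2) * θ^2)) := by
    rw [hKval]; ring
  rw [heq, abs_mul, abs_of_pos (Real.exp_pos x)]
  calc Real.exp x * |(∫ θ in Set.Ioc (0:ℝ) π, θ^2 * Real.cos θ * Real.exp (-x * (1 - Real.cos θ)))
      - ∫ θ in Set.Ioi (0:ℝ), θ^2 * Real.exp (-(x/2) * θ^2)|
      ≤ Real.exp x * (200 * x ^ (-(5:ℝ)/2)) :=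
        mul_le_mul_of_nonneg_left hkey (Real.exp_pos x).le
    _ = 200 * Real.exp x * x ^ (-(5:ℝ)/2) := by ring
end
end

section
/- For every real q with 0 < q < 1, the series ∑_{n≥1} s_1(n) q^n converges and equals (P(q)/P(q^2)) · log( P(q)/P(q^2)^2 ), where log denotes the real logarithm (the argument P(q)/P(q^2)^2 is a positive real number). -/
open scoped Real
open MeasureTheory

noncomputable section

/-- `P(q) = ∏_{j ≥ 1} (1 - q^j)⁻¹`. -/
def Pgen (q : ℝ) : ℝ := (∏' j : ℕ, (1 - q ^ (j + 1)))⁻¹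

namespace S9


variable {q : ℝ}

lemma pow_succ_lt_one (hq0 : 0 < q) (hq1 : q < 1) (j : ℕ) : q ^ (j+1) < 1 :=
  pow_lt_one₀ hq0.le hq1 (Nat.succ_ne_zero j)

lemma pow_succ_pos (hq0 : 0 < q) (j : ℕ) : 0 < q ^ (j+1) := pow_pos hq0 _

lemma one_sub_pos' (hq0 : 0 < q) (hq1 : q < 1) (j : ℕ) : 0 < 1 - q ^ (j+1) := by
  linarith [pow_succ_lt_one hq0 hq1 j]

lemma summable_log_one_sub (hq0 : 0 < q) (hq1 : q < 1) :
    Summable (fun j : ℕ => Real.log (1 - q ^ (j+1))) := by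
  have hg : Summable (fun j : ℕ => q ^ (j+1) / (1 - q)) := by
    simpa [pow_succ'] using ((summable_geometric_of_lt_one hq0.le hq1).mul_left q).div_const (1 - q)
  refine Summable.of_norm_bounded hg (fun j => ?_)
  have h1 : 0 < 1 - q ^ (j+1) := one_sub_pos' hq0 hq1 j
  have hle : q ^ (j+1) ≤ q := by
    simpa using pow_le_pow_of_le_one hq0.le hq1.le (Nat.one_le_iff_ne_zero.2 (Nat.succ_ne_zero j))
  have hlog0 : Real.log (1 - q ^ (j+1)) ≤ 0 := by
    apply Real.log_nonpos h1.le; linarith [pow_succ_pos hq0 j]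
  rw [Real.norm_eq_abs, abs_of_nonpos hlog0]
  have : Real.log ((1 - q ^ (j+1))⁻¹) ≤ (1 - q ^ (j+1))⁻¹ - 1 :=
    Real.log_le_sub_one_of_pos (by positivity)
  rw [Real.log_inv] at this
  have h2 : (1 - q ^ (j+1))⁻¹ - 1 = q ^ (j+1) / (1 - q ^ (j+1)) := by
    field_simp
    ring
  rw [h2] at this
  refine this.trans ?_
  apply div_le_div_of_nonneg_left (pow_succ_pos hq0 j).le (by linarith) (by linarith)

lemma summable_log_one_add (hq0 : 0 < q) (hq1 : q < 1) :
    Summable (fun j : ℕ => Real.log (1 + q ^ (j+1))) := by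
  have hg : Summable (fun j : ℕ => q ^ (j+1)) := by
    simpa [pow_succ'] using ((summable_geometric_of_lt_one hq0.le hq1).mul_left q)
  refine Summable.of_norm_bounded hg (fun j => ?_)
  have h0 : (0:ℝ) < 1 + q ^ (j+1) := by positivity
  have hlog0 : 0 ≤ Real.log (1 + q ^ (j+1)) := by
    apply Real.log_nonneg; linarith [pow_succ_pos hq0 j]
  rw [Real.norm_eq_abs, abs_of_nonneg hlog0]
  have := Real.log_le_sub_one_of_pos h0
  linarith

lemma hasProd_one_sub (hq0 : 0 < q) (hq1 : q < 1) :
    HasProd (fun j : ℕ => 1 - q ^ (j+1))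
      (Real.exp (∑' j : ℕ, Real.log (1 - q ^ (j+1)))) := by
  have := (summable_log_one_sub hq0 hq1).hasSum.rexp
  convert this using 2 with j
  · exact (Real.exp_log (one_sub_pos' hq0 hq1 j)).symm

lemma hasProd_one_add (hq0 : 0 < q) (hq1 : q < 1) :
    HasProd (fun j : ℕ => 1 + q ^ (j+1))
      (Real.exp (∑' j : ℕ, Real.log (1 + q ^ (j+1)))) := by
  have := (summable_log_one_add hq0 hq1).hasSum.rexp
  convert this using 2 with j
  · exact (Real.exp_log (by positivity)).symm



variable {q : ℝ}


-- Lambert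
lemma hasSum_geom_succ {r : ℝ} (h0 : 0 ≤ r) (h1 : r < 1) :
    HasSum (fun m : ℕ => r ^ (m+1)) (r / (1 - r)) := by
  have := (hasSum_geometric_of_lt_one h0 h1).mul_left r
  simpa [pow_succ', div_eq_mul_inv, mul_comm] using this

lemma summable_F (hq0 : 0 < q) (hq1 : q < 1) :
    Summable (fun p : ℕ × ℕ => q ^ ((p.1+1)*(p.2+1)) / (p.1+1 : ℝ)) := by
  have hge : Summable (fun j : ℕ => q ^ j) := summable_geometric_of_lt_one hq0.le hq1
  have h2 : Summable (fun p : ℕ × ℕ => q ^ p.1 * q ^ p.2) :=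
    hge.mul_of_nonneg hge (fun j => by positivity) (fun j => by positivity)
  refine Summable.of_nonneg_of_le (fun p => by positivity) (fun p => ?_) (h2.mul_left q)
  obtain ⟨j, m⟩ := p
  have hexp : j + m + 1 ≤ (j+1)*(m+1) := by nlinarith
  calc q ^ ((j+1)*(m+1)) / (j+1 : ℝ) ≤ q ^ ((j+1)*(m+1)) / 1 := by
        apply div_le_div_of_nonneg_left (by positivity) one_pos ?_
        exact_mod_cast Nat.succ_le_succ (Nat.zero_le j)
    _ = q ^ ((j+1)*(m+1)) := by rw [div_one]
    _ ≤ q ^ (j + m + 1) := pow_le_pow_of_le_one hq0.le hq1.le hexp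
    _ = q * (q ^ j * q ^ m) := by ring

lemma lambert (hq0 : 0 < q) (hq1 : q < 1) :
    HasSum (fun j : ℕ => q ^ (j+1) / ((j+1 : ℝ) * (1 - q ^ (j+1))))
      (-∑' m : ℕ, Real.log (1 - q ^ (m+1))) := by
  set F : ℕ × ℕ → ℝ := fun p => q ^ ((p.1+1)*(p.2+1)) / (p.1+1 : ℝ) with hF
  have hFs : Summable F := summable_F hq0 hq1
  have hrow : ∀ j : ℕ, HasSum (fun m => F (j, m))
      (q ^ (j+1) / ((j+1 : ℝ) * (1 - q ^ (j+1)))) := by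
    intro j
    have h1 : (q ^ (j+1)) < 1 := pow_lt_one₀ hq0.le hq1 (Nat.succ_ne_zero j)
    have h2 := (hasSum_geom_succ (r := q ^ (j+1)) (by positivity) h1).div_const ((j:ℝ)+1)
    have hval : q ^ (j+1) / (1 - q^(j+1)) / ((j:ℝ)+1)
        = q^(j+1) / (((j:ℝ)+1) * (1 - q ^ (j+1))) := by
      rw [div_div, mul_comm]
    rw [hval] at h2
    have hfun : (fun m : ℕ => F (j, m)) = fun m : ℕ => (q^(j+1))^(m+1)/((j:ℝ)+1) := by
      funext m; simp only [hF, ← pow_mul]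
    rw [hfun]; exact h2
  have hcol : ∀ m : ℕ, HasSum (fun j => F (j, m)) (-Real.log (1 - q ^ (m+1))) := by
    intro m
    have h1 : |q ^ (m+1)| < 1 := by
      rw [abs_of_nonneg (by positivity)]; exact pow_lt_one₀ hq0.le hq1 (Nat.succ_ne_zero m)
    have h2 := Real.hasSum_pow_div_log_of_abs_lt_one h1
    have hfun : (fun j : ℕ => F (j, m)) = fun j : ℕ => (q^(m+1))^(j+1)/((j:ℝ)+1) := by
      funext j; simp only [hF, ← pow_mul, mul_comm]
    rw [hfun]; exact h2
  have h1 : HasSum (fun j : ℕ => q ^ (j+1) / ((j+1 : ℝ) * (1 - q ^ (j+1)))) (∑' p, F p) :=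
    hFs.hasSum.prod_fiberwise hrow
  have h2 : HasSum (fun m : ℕ => -Real.log (1 - q ^ (m+1))) (∑' p, F p) := by
    have := hFs.prod_symm.hasSum.prod_fiberwise (fun m => hcol m)
    have he : ∑' p : ℕ × ℕ, F p.swap = ∑' p, F p := Equiv.prodComm ℕ ℕ |>.tsum_eq F
    simpa [he] using this
  rwa [← h2.tsum_eq, tsum_neg] at h1

lemma hasSum_c (hq0 : 0 < q) (hq1 : q < 1) :
    HasSum (fun j : ℕ => q ^ (j+1) / ((j+1 : ℝ) * (1 + q ^ (j+1))))
      ((-∑' m : ℕ, Real.log (1 - q ^ (m+1)))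
        + 2 * ∑' m : ℕ, Real.log (1 - (q^2) ^ (m+1))) := by
  have hr0 : 0 < q ^ 2 := by positivity
  have hr1 : q ^ 2 < 1 := by nlinarith
  have h1 := lambert hq0 hq1
  have h2 := (lambert hr0 hr1).mul_left 2
  have h := h1.sub h2
  have hfun : (fun j : ℕ => q ^ (j+1) / ((j+1 : ℝ) * (1 - q ^ (j+1)))
      - 2 * ((q^2) ^ (j+1) / ((j+1 : ℝ) * (1 - (q^2) ^ (j+1)))))
      = fun j : ℕ => q ^ (j+1) / ((j+1 : ℝ) * (1 + q ^ (j+1))) := by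
    funext j
    have hx1 : q ^ (j+1) < 1 := pow_lt_one₀ hq0.le hq1 (Nat.succ_ne_zero j)
    have hx0 : 0 < q ^ (j+1) := by positivity
    have hsq : (q^2) ^ (j+1) = (q ^ (j+1))^2 := by rw [← pow_mul, ← pow_mul, Nat.mul_comm]
    rw [hsq]
    have hj : ((j:ℝ)+1) ≠ 0 := by positivity
    generalize hx : q ^ (j+1) = x at *
    have hne1 : 1 - x ≠ 0 := by linarith
    have hne2 : 1 + x ≠ 0 := by linarith
    have e1 : 1 - x^2 = (1 - x) * (1 + x) := by ring
    rw [e1]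
    field_simp
    ring
  rw [hfun] at h
  convert h using 1
  · rfl
  · ring


def cc (q : ℝ) (j : ℕ) : ℝ := q ^ (j+1) / ((j+1 : ℝ) * (1 + q ^ (j+1)))

def gg (q : ℝ) (T : Finset ℕ) : ℝ := (∑ i ∈ T, (1:ℝ)/(i+1)) * ∏ i ∈ T, q ^ (i+1)

lemma FI0 (q : ℝ) (s : Finset ℕ) :
    ∑ T ∈ s.powerset, ∏ i ∈ T, q ^ (i+1) = ∏ i ∈ s, (1 + q ^ (i+1)) := by
  classical
  induction s using Finset.induction_on with
  | empty => simp
  | @insert a s ha ih =>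
    rw [Finset.sum_powerset_insert ha, Finset.prod_insert ha, ← ih]
    have : ∀ T ∈ s.powerset, ∏ i ∈ insert a T, q ^ (i+1) = q^(a+1) * ∏ i ∈ T, q ^ (i+1) := by
      intro T hT
      rw [Finset.prod_insert]
      intro haT
      exact ha (Finset.mem_powerset.1 hT haT)
    rw [Finset.sum_congr rfl this, ← Finset.mul_sum]
    ring

lemma FI (hq0 : 0 < q) (s : Finset ℕ) :
    ∑ T ∈ s.powerset, gg q T = (∏ i ∈ s, (1 + q ^ (i+1))) * ∑ j ∈ s, cc q j := by
  classical
  induction s using Finset.induction_on with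
  | empty => simp [gg]
  | @insert a s ha ih =>
    rw [Finset.sum_powerset_insert ha, Finset.prod_insert ha, Finset.sum_insert ha, ih]
    have key : ∀ T ∈ s.powerset,
        gg q (insert a T) = q^(a+1) * gg q T + (1/((a:ℝ)+1)) * q^(a+1) * ∏ i ∈ T, q ^ (i+1) := by
      intro T hT
      have haT : a ∉ T := fun haT => ha (Finset.mem_powerset.1 hT haT)
      rw [gg, Finset.sum_insert haT, Finset.prod_insert haT, gg]
      ring
    rw [Finset.sum_congr rfl key, Finset.sum_add_distrib, ← Finset.mul_sum, ← Finset.mul_sum,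
      FI0, ih]
    have hca : (1 + q^(a+1)) * cc q a = (1/((a:ℝ)+1)) * q^(a+1) := by
      rw [cc]
      have h1 : ((a:ℝ)+1) ≠ 0 := by positivity
      have h2 : (1 + q^(a+1)) ≠ 0 := by positivity
      field_simp
    linear_combination (-(∏ i ∈ s, (1 + q ^ (i+1)))) * hca

lemma cc_nonneg (hq0 : 0 < q) (j : ℕ) : 0 ≤ cc q j := by
  rw [cc]; positivity

lemma gg_nonneg (hq0 : 0 < q) (T : Finset ℕ) : 0 ≤ gg q T := by
  rw [gg]
  apply mul_nonneg
  · exact Finset.sum_nonneg fun i _ => by positivity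
  · exact Finset.prod_nonneg fun i _ => by positivity

lemma hasSum_gg (hq0 : 0 < q) (hq1 : q < 1) {D L : ℝ}
    (hD : HasProd (fun i : ℕ => 1 + q ^ (i+1)) D) (hL : HasSum (cc q) L)
    (hPle : ∀ s : Finset ℕ, (∏ i ∈ s, (1 + q ^ (i+1))) ≤ D) :
    HasSum (gg q) (D * L) := by
  classical
  have hDnn : 0 ≤ D := le_trans zero_le_one (by simpa using hPle ∅)
  apply hasSum_of_isLUB_of_nonneg (D * L) (fun T => gg_nonneg hq0 T)
  constructor
  · rintro x ⟨𝒯, rfl⟩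
    set s : Finset ℕ := 𝒯.sup id with hs
    have hsub : 𝒯 ⊆ s.powerset := by
      intro T hT
      rw [Finset.mem_powerset]
      exact Finset.le_sup (f := id) hT
    have h1 : ∑ T ∈ 𝒯, gg q T ≤ ∑ T ∈ s.powerset, gg q T :=
      Finset.sum_le_sum_of_subset_of_nonneg hsub (fun T _ _ => gg_nonneg hq0 T)
    rw [FI hq0 s] at h1
    refine h1.trans (mul_le_mul ?_ ?_ ?_ hDnn)
    · exact hPle s
    · exact sum_le_hasSum s (fun j _ => cc_nonneg hq0 j) hL
    · exact Finset.sum_nonneg fun j _ => cc_nonneg hq0 j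
  · intro b hb
    have htend : Filter.Tendsto
        (fun N : ℕ => (∏ i ∈ Finset.range N, (1 + q ^ (i+1))) * ∑ j ∈ Finset.range N, cc q j)
        Filter.atTop (nhds (D * L)) :=
      (hD.tendsto_prod_nat).mul (hL.tendsto_sum_nat)
    refine le_of_tendsto htend (Filter.Eventually.of_forall fun N => ?_)
    rw [← FI hq0 (Finset.range N)]
    exact hb ⟨(Finset.range N).powerset, rfl⟩


def mfun (T : Finset ℕ) : ℕ := ∑ i ∈ T, (i+1)

lemma mem_range_of_mfun {T : Finset ℕ} {n : ℕ} (h : mfun T = n) : T ⊆ Finset.range n := by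
  intro i hi
  rw [Finset.mem_range]
  have h2 := Finset.single_le_sum (f := fun i => i + 1) (fun j _ => Nat.zero_le _) hi
  rw [mfun] at h
  omega

def fiberSet (n : ℕ) : Finset (Finset ℕ) := (Finset.range n).powerset.filter (fun T => mfun T = n)

lemma mem_fiberSet {n : ℕ} (T : Finset ℕ) : T ∈ fiberSet n ↔ mfun T = n := by
  simp only [fiberSet, Finset.mem_filter, Finset.mem_powerset]
  exact ⟨fun h => h.2, fun h => ⟨mem_range_of_mfun h, h⟩⟩

instance fiberFintype (n : ℕ) : Fintype {T : Finset ℕ // mfun T = n} :=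
  Fintype.subtype (fiberSet n) mem_fiberSet

/-- partition from a finset -/
def toPart (T : Finset ℕ) (n : ℕ) (h : mfun T = n) : Nat.Partition n where
  parts := T.val.map (· + 1)
  parts_pos := by
    intro i hi
    rw [Multiset.mem_map] at hi
    obtain ⟨a, _, rfl⟩ := hi
    omega
  parts_sum := by
    have : (T.val.map (· + 1)).sum = mfun T := by
      rw [mfun, Finset.sum]
    rw [this, h]

def toFin {n : ℕ} (p : Nat.Partition n) (hp : p ∈ Nat.Partition.distincts n) : Finset ℕ :=
  ⟨p.parts.map (· - 1), by
    have hnd : p.parts.Nodup := (Finset.mem_filter.1 hp).2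
    refine hnd.map_on ?_
    intro x hx y hy hxy
    have hx1 := p.parts_pos hx
    have hy1 := p.parts_pos hy
    omega⟩

lemma key_sum (hq0 : 0 < q) (n : ℕ) :
    ∑ T ∈ fiberSet n, gg q T
      = ∑ p ∈ Nat.Partition.distincts n, ((p.parts.map fun j => (1:ℝ) / j).sum) * q ^ n := by
  classical
  refine Finset.sum_bij'
    (fun T hT => toPart T n ((mem_fiberSet T).1 hT))
    (fun p hp => toFin p hp) ?_ ?_ ?_ ?_ ?_
  · -- membership in distincts
    intro T hT
    rw [Nat.Partition.distincts, Finset.mem_filter]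
    refine ⟨Finset.mem_univ _, ?_⟩
    show (T.val.map (· + 1)).Nodup
    exact T.nodup.map (fun a b h => by omega)
  · -- membership in fiberSet
    intro p hp
    rw [mem_fiberSet]
    show mfun (toFin p hp) = n
    have : mfun (toFin p hp) = ((p.parts.map (· - 1)).map (· + 1)).sum := by
      rw [mfun, Finset.sum]; rfl
    rw [this, Multiset.map_map]
    have : Multiset.map ((· + 1) ∘ (· - 1)) p.parts = Multiset.map id p.parts := by
      apply Multiset.map_congr rfl
      intro x hx
      have := p.parts_pos hx
      simp only [Function.comp_apply, id_eq]
      omega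
    rw [this, Multiset.map_id]
    exact p.parts_sum
  · -- left inverse
    intro T hT
    apply Finset.val_injective
    show (T.val.map (· + 1)).map (· - 1) = T.val
    rw [Multiset.map_map]
    have : Multiset.map ((· - 1) ∘ (· + 1)) T.val = Multiset.map id T.val :=
      Multiset.map_congr rfl (fun x _ => by simp)
    rw [this, Multiset.map_id]
  · -- right inverse
    intro p hp
    apply Nat.Partition.ext
    show (p.parts.map (· - 1)).map (· + 1) = p.parts
    rw [Multiset.map_map]
    have : Multiset.map ((· + 1) ∘ (· - 1)) p.parts = Multiset.map id p.parts := by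
      apply Multiset.map_congr rfl
      intro x hx
      have := p.parts_pos hx
      simp only [Function.comp_apply, id_eq]
      omega
    rw [this, Multiset.map_id]
  · -- values
    intro T hT
    have hmf : mfun T = n := (mem_fiberSet T).1 hT
    rw [gg]
    have h1 : ∏ i ∈ T, q ^ (i+1) = q ^ n := by
      rw [Finset.prod_pow_eq_pow_sum]
      have : ∑ i ∈ T, (i+1) = n := hmf
      rw [this]
    rw [h1]
    congr 1
    have h2 : (toPart T n hmf).parts = T.val.map (fun i => i + 1) := rfl
    rw [h2]
    simp only [bind_pure_comp, Multiset.fmap_def, Multiset.map_map]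
    rw [Finset.sum]
    apply congrArg
    apply Multiset.map_congr rfl
    intro x hx
    simp only [Function.comp_apply]
    push_cast
    ring

lemma fiber_hasSum (hq0 : 0 < q) (n : ℕ) :
    HasSum (fun c : {T : Finset ℕ // mfun T = n} => gg q c.1) (s1 n * q ^ n) := by
  have h := hasSum_fintype (fun c : {T : Finset ℕ // mfun T = n} => gg q c.1)
  have hval : ∑ c : {T : Finset ℕ // mfun T = n}, gg q c.1 = s1 n * q ^ n := by
    rw [← Finset.sum_subtype (fiberSet n) mem_fiberSet (gg q), key_sum hq0 n, s1,
      Finset.sum_mul]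
  rwa [hval] at h

lemma hasSum_s1_of_gg (hq0 : 0 < q) {S : ℝ} (hgg : HasSum (gg q) S) :
    HasSum (fun n : ℕ => s1 n * q ^ n) S :=
  HasSum.sigma ((Equiv.sigmaFiberEquiv mfun).hasSum_iff.2 hgg) (fun n => fiber_hasSum hq0 n)

end S9

theorem stmt9 (q : ℝ) (hq0 : 0 < q) (hq1 : q < 1) :
    Summable (fun n : ℕ => s1 (n + 1) * q ^ (n + 1)) ∧
    ∑' n : ℕ, s1 (n + 1) * q ^ (n + 1) =
      Pgen q / Pgen (q ^ 2) * Real.log (Pgen q / Pgen (q ^ 2) ^ 2) := by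
  classical
  have hr0 : 0 < q ^ 2 := by positivity
  have hr1 : q ^ 2 < 1 := by nlinarith
  set S1 : ℝ := ∑' m : ℕ, Real.log (1 - q ^ (m+1)) with hS1
  set S2 : ℝ := ∑' m : ℕ, Real.log (1 - (q^2) ^ (m+1)) with hS2
  set L0 : ℝ := ∑' j : ℕ, Real.log (1 + q ^ (j+1)) with hL0
  have hProdA : HasProd (fun j : ℕ => 1 - q ^ (j+1)) (Real.exp S1) := S9.hasProd_one_sub hq0 hq1
  have hProdA2 : HasProd (fun j : ℕ => 1 - (q^2) ^ (j+1)) (Real.exp S2) :=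
    S9.hasProd_one_sub hr0 hr1
  have hD : HasProd (fun j : ℕ => 1 + q ^ (j+1)) (Real.exp L0) := S9.hasProd_one_add hq0 hq1
  -- D * exp S1 = exp S2
  have hmul := hD.mul hProdA
  have hfun : (fun j : ℕ => (1 + q ^ (j+1)) * (1 - q ^ (j+1)))
      = fun j : ℕ => 1 - (q^2) ^ (j+1) := by
    funext j
    have : (q^2) ^ (j+1) = (q ^ (j+1))^2 := by
      rw [← pow_mul, ← pow_mul, Nat.mul_comm]
    rw [this]
    ring
  rw [hfun] at hmul
  have hDE : Real.exp L0 * Real.exp S1 = Real.exp S2 := hmul.unique hProdA2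
  have hDeq : Real.exp L0 = Real.exp (S2 - S1) := by
    rw [Real.exp_sub, eq_div_iff (Real.exp_ne_zero S1)]
    exact hDE
  -- Pgen values
  have hPq : Pgen q = Real.exp (-S1) := by
    rw [Pgen, hProdA.tprod_eq, ← Real.exp_neg]
  have hPq2 : Pgen (q^2) = Real.exp (-S2) := by
    rw [Pgen, hProdA2.tprod_eq, ← Real.exp_neg]
  -- the sum of the cc series
  have hL : HasSum (S9.cc q) (-S1 + 2 * S2) := by
    have := S9.hasSum_c hq0 hq1
    exact this
  -- partial products bounded by exp L0
  have hPle : ∀ s : Finset ℕ, (∏ i ∈ s, (1 + q ^ (i+1))) ≤ Real.exp L0 := by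
    intro s
    have h1 : (∏ i ∈ s, (1 + q ^ (i+1))) = Real.exp (∑ i ∈ s, Real.log (1 + q ^ (i+1))) := by
      rw [Real.exp_sum]
      exact Finset.prod_congr rfl fun i _ => (Real.exp_log (by positivity)).symm
    rw [h1, Real.exp_le_exp]
    exact (S9.summable_log_one_add hq0 hq1).sum_le_tsum s
      (fun i _ => Real.log_nonneg (by nlinarith [pow_pos hq0 (i+1)]))
  have hgg : HasSum (S9.gg q) (Real.exp L0 * (-S1 + 2 * S2)) :=
    S9.hasSum_gg hq0 hq1 hD hL hPle
  have hs1 : HasSum (fun n : ℕ => s1 n * q ^ n) (Real.exp L0 * (-S1 + 2 * S2)) :=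
    S9.hasSum_s1_of_gg hq0 hgg
  -- the 0-th term vanishes
  have h0 : s1 0 * q ^ 0 = 0 := by
    have hk := S9.key_sum (q := q) hq0 0
    rw [← Finset.sum_mul] at hk
    rw [show (∑ p ∈ Nat.Partition.distincts 0, ((p.parts.map fun j => (1:ℝ) / j).sum)) = s1 0
      from rfl] at hk
    rw [← hk]
    apply Finset.sum_eq_zero
    intro T hT
    have hsub : T ⊆ Finset.range 0 := by
      have := (S9.mem_fiberSet T).1 hT
      exact S9.mem_range_of_mfun this
    have : T = ∅ := Finset.subset_empty.1 (by simpa using hsub)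
    subst this
    simp [S9.gg]
  have h0' : s1 0 = 0 := by simpa using h0
  have hshift : HasSum (fun n : ℕ => s1 (n + 1) * q ^ (n + 1)) (Real.exp L0 * (-S1 + 2 * S2)) := by
    refine (hasSum_nat_add_iff (f := fun n : ℕ => s1 n * q ^ n) 1).2 ?_
    have : Real.exp L0 * (-S1 + 2 * S2) + ∑ i ∈ Finset.range 1, s1 i * q ^ i
        = Real.exp L0 * (-S1 + 2 * S2) := by
      simp [h0']
    rw [this]
    exact hs1
  refine ⟨hshift.summable, ?_⟩
  rw [hshift.tsum_eq]
  have hrhs : Pgen q / Pgen (q ^ 2) * Real.log (Pgen q / Pgen (q ^ 2) ^ 2)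
      = Real.exp L0 * (-S1 + 2 * S2) := by
    rw [hPq, hPq2, hDeq]
    have h1 : Real.exp (-S1) / Real.exp (-S2) = Real.exp (S2 - S1) := by
      rw [← Real.exp_sub]; ring_nf
    have h2 : Real.exp (-S1) / (Real.exp (-S2))^2 = Real.exp (-S1 + 2 * S2) := by
      rw [sq, ← Real.exp_add, ← Real.exp_sub]
      ring_nf
    rw [h1, h2, Real.log_exp]
  rw [hrhs]
end
end

section
/- For all coprime integers h, k with k ≥ 1 odd, one has k ∑_{ℓ=1}^{2k} (−1)^ℓ B_2(ℓ/(2k)) Li_2(e^{2πihℓ/k}) = (3k−1)π^2/48 + π^2 k ∑_{ℓ=1}^{2k} (−1)^ℓ ((hℓ/k))^2 B_2(ℓ/(2k)). -/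
open scoped Real
open MeasureTheory

noncomputable section

/-- `L(q) = ∑_{r≥1} q^r/(r²(1+q^r)²)`. -/
def Lq (q : ℂ) : ℂ := ∑' r : ℕ, q ^ (r + 1) / (((r : ℂ) + 1) ^ 2 * (1 + q ^ (r + 1)) ^ 2)

/-- The dilogarithm `Li₂(w) = ∑_{n≥1} wⁿ/n²`. -/
def Li2 (w : ℂ) : ℂ := ∑' n : ℕ, w ^ (n + 1) / ((n : ℂ) + 1) ^ 2

/-- The `m`-th Bernoulli polynomial evaluated at a real number. -/
def bernPoly (m : ℕ) (x : ℝ) : ℝ := Polynomial.aeval x (Polynomial.bernoulli m)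

lemma bern2 (x : ℝ) : bernPoly 2 x = x ^ 2 - x + 1 / 6 := by
  have h2 : (bernoulli 2 : ℚ) = 1 / 6 := by
    rw [bernoulli_eq_bernoulli'_of_ne_one (by norm_num), bernoulli'_two]
  simp [bernPoly, Polynomial.bernoulli, Finset.sum_range_succ, Polynomial.aeval_monomial, h2,
    bernoulli_one, bernoulli_zero]
  ring

lemma summable_li2 {w : ℂ} (hw : ‖w‖ ≤ 1) :
    Summable (fun n : ℕ => w ^ (n + 1) / ((n : ℂ) + 1) ^ 2) := by
  have hg : Summable (fun n : ℕ => 1 / ((n : ℝ) + 1) ^ 2) := by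
    have := (Real.summable_one_div_nat_pow (p := 2)).mpr one_lt_two
    have := (summable_nat_add_iff 1).mpr this
    simpa using this
  refine Summable.of_norm_bounded hg fun n => ?_
  rw [norm_div, norm_pow, norm_pow]
  have h1 : ‖((n : ℂ) + 1)‖ = (n : ℝ) + 1 := by
    rw [show ((n : ℂ) + 1) = ((n + 1 : ℕ) : ℂ) by push_cast; ring, Complex.norm_natCast]
    push_cast; ring
  rw [h1]
  have hpos : (0:ℝ) < ((n : ℝ) + 1) ^ 2 := by positivity
  rw [div_le_div_iff₀ hpos hpos, one_mul]
  have : ‖w‖ ^ (n + 1) ≤ 1 := pow_le_one₀ (norm_nonneg w) hw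
  nlinarith [sq_nonneg ((n:ℝ)+1)]

lemma hasSum_li2 {w : ℂ} (hw : ‖w‖ ≤ 1) :
    HasSum (fun n : ℕ => w ^ (n + 1) / ((n : ℂ) + 1) ^ 2) (Li2 w) :=
  (summable_li2 hw).hasSum

lemma hasSum_cos_bern {y : ℝ} (hy : y ∈ Set.Icc (0:ℝ) 1) :
    HasSum (fun n : ℕ => 1 / ((n : ℝ) + 1) ^ 2 * Real.cos (2 * π * ((n : ℝ) + 1) * y))
      (π ^ 2 * bernPoly 2 y) := by
  have H : HasSum (fun n : ℕ => 1 / (n : ℝ) ^ 2 * Real.cos (2 * π * n * y))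
      (π ^ 2 * bernPoly 2 y) := by
    have := hasSum_one_div_nat_pow_mul_cos (k := 1) one_ne_zero hy
    rw [bernPoly, Polynomial.aeval_def, ← Polynomial.eval_map]
    convert this using 2
    · norm_num
      ring
  have H' : HasSum (fun n : ℕ => 1 / (n : ℝ) ^ 2 * Real.cos (2 * π * n * y))
      (π ^ 2 * bernPoly 2 y +
        ∑ i ∈ Finset.range 1, 1 / (i : ℝ) ^ 2 * Real.cos (2 * π * i * y)) := by
    simpa using H
  have H2 := (hasSum_nat_add_iff
    (f := fun n : ℕ => 1 / (n : ℝ) ^ 2 * Real.cos (2 * π * n * y)) 1).mpr H'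
  convert H2 using 1
  · exact rfl
  funext n
  push_cast
  ring_nf

lemma li2_add_li2 (x : ℝ) :
    Li2 (Complex.exp (2 * π * Complex.I * x)) + Li2 (Complex.exp (-(2 * π * Complex.I * x))) =
      ((2 * π ^ 2 * bernPoly 2 (Int.fract x) : ℝ) : ℂ) := by
  set y : ℝ := Int.fract x with hy
  have hxy : x = y + (⌊x⌋ : ℝ) := by rw [hy, Int.fract]; ring
  have e1 : Complex.exp (2 * π * Complex.I * x) = Complex.exp (2 * π * Complex.I * y) := by
    rw [hxy]
    push_cast
    rw [show 2 * (π:ℂ) * Complex.I * ((y:ℂ) + (⌊x⌋:ℤ)) =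
      2 * π * Complex.I * (y:ℂ) + (⌊x⌋:ℤ) * (2 * π * Complex.I) by push_cast; ring,
      Complex.exp_add, Complex.exp_int_mul_two_pi_mul_I, mul_one]
  have e2 : Complex.exp (-(2 * π * Complex.I * x)) = Complex.exp (-(2 * π * Complex.I * y)) := by
    rw [hxy]
    push_cast
    rw [show -(2 * (π:ℂ) * Complex.I * ((y:ℂ) + (⌊x⌋:ℤ))) =
      -(2 * π * Complex.I * (y:ℂ)) + (-⌊x⌋:ℤ) * (2 * π * Complex.I) by push_cast; ring,
      Complex.exp_add, Complex.exp_int_mul_two_pi_mul_I, mul_one]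
  rw [e1, e2]
  have hnorm1 : ‖Complex.exp (2 * π * Complex.I * y)‖ ≤ 1 := by
    rw [Complex.norm_exp]
    norm_num [Complex.mul_re]
  have hnorm2 : ‖Complex.exp (-(2 * π * Complex.I * y))‖ ≤ 1 := by
    rw [Complex.norm_exp]
    norm_num [Complex.mul_re]
  have h1 := hasSum_li2 hnorm1
  have h2 := hasSum_li2 hnorm2
  have hc := hasSum_cos_bern (Set.mem_Icc.mpr ⟨Int.fract_nonneg x, (Int.fract_lt_one x).le⟩)
  have hc2 : HasSum (fun n : ℕ =>
      ((2 * (1 / ((n : ℝ) + 1) ^ 2 * Real.cos (2 * π * ((n : ℝ) + 1) * y)) : ℝ) : ℂ))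
      ((2 * (π ^ 2 * bernPoly 2 y) : ℝ) : ℂ) := by
    exact Complex.hasSum_ofReal.mpr (hc.mul_left 2)
  have key : ∀ n : ℕ,
      Complex.exp (2 * π * Complex.I * y) ^ (n + 1) / ((n : ℂ) + 1) ^ 2 +
        Complex.exp (-(2 * π * Complex.I * y)) ^ (n + 1) / ((n : ℂ) + 1) ^ 2 =
      ((2 * (1 / ((n : ℝ) + 1) ^ 2 * Real.cos (2 * π * ((n : ℝ) + 1) * y)) : ℝ) : ℂ) := by
    intro n
    have p1 : Complex.exp (2 * π * Complex.I * y) ^ (n + 1) =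
        Complex.exp (((2 * π * ((n : ℝ) + 1) * y : ℝ) : ℂ) * Complex.I) := by
      rw [← Complex.exp_nat_mul]
      congr 1
      push_cast
      ring
    have p2 : Complex.exp (-(2 * π * Complex.I * y)) ^ (n + 1) =
        Complex.exp (-((2 * π * ((n : ℝ) + 1) * y : ℝ) : ℂ) * Complex.I) := by
      rw [← Complex.exp_nat_mul]
      congr 1
      push_cast
      ring
    rw [p1, p2, ← add_div, ← Complex.two_cos, ← Complex.ofReal_cos]
    push_cast
    have hne : ((n : ℂ) + 1) ≠ 0 := Nat.cast_add_one_ne_zero n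
    field_simp
  have hfun : (fun n : ℕ =>
      Complex.exp (2 * π * Complex.I * y) ^ (n + 1) / ((n : ℂ) + 1) ^ 2 +
        Complex.exp (-(2 * π * Complex.I * y)) ^ (n + 1) / ((n : ℂ) + 1) ^ 2) =
      (fun n : ℕ =>
        ((2 * (1 / ((n : ℝ) + 1) ^ 2 * Real.cos (2 * π * ((n : ℝ) + 1) * y)) : ℝ) : ℂ)) :=
    funext key
  have hadd := h1.add h2
  rw [hfun] at hadd
  have := HasSum.unique hadd hc2
  rw [this]
  congr 1
  ring

lemma alt_sum0 (k : ℕ) : ∑ ℓ ∈ Finset.Icc 1 (2 * k), (-1 : ℝ) ^ ℓ = 0 := by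
  induction k with
  | zero => simp
  | succ n ih =>
    have e1 : 2 * (n + 1) = (2 * n + 1) + 1 := by ring
    rw [e1, Finset.sum_Icc_succ_top (by omega), Finset.sum_Icc_succ_top (by omega), ih]
    have o1 : Odd (2 * n + 1) := ⟨n, by ring⟩
    have o2 : Even (2 * n + 1 + 1) := ⟨n + 1, by ring⟩
    rw [o1.neg_one_pow, o2.neg_one_pow]
    ring

lemma alt_sum1 (k : ℕ) : ∑ ℓ ∈ Finset.Icc 1 (2 * k), (-1 : ℝ) ^ ℓ * ℓ = k := by
  induction k with
  | zero => simp
  | succ n ih =>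
    have e1 : 2 * (n + 1) = (2 * n + 1) + 1 := by ring
    rw [e1, Finset.sum_Icc_succ_top (by omega), Finset.sum_Icc_succ_top (by omega), ih]
    have o1 : Odd (2 * n + 1) := ⟨n, by ring⟩
    have o2 : Even (2 * n + 1 + 1) := ⟨n + 1, by ring⟩
    rw [o1.neg_one_pow, o2.neg_one_pow]
    push_cast
    ring

lemma alt_sum2 (k : ℕ) :
    ∑ ℓ ∈ Finset.Icc 1 (2 * k), (-1 : ℝ) ^ ℓ * (ℓ : ℝ) ^ 2 = 2 * (k : ℝ) ^ 2 + k := by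
  induction k with
  | zero => simp
  | succ n ih =>
    have e1 : 2 * (n + 1) = (2 * n + 1) + 1 := by ring
    rw [e1, Finset.sum_Icc_succ_top (by omega), Finset.sum_Icc_succ_top (by omega), ih]
    have o1 : Odd (2 * n + 1) := ⟨n, by ring⟩
    have o2 : Even (2 * n + 1 + 1) := ⟨n + 1, by ring⟩
    rw [o1.neg_one_pow, o2.neg_one_pow]
    push_cast
    ring

lemma sumA (k : ℕ) (hk : 1 ≤ k) :
    ∑ ℓ ∈ Finset.Icc 1 (2 * k), (-1 : ℝ) ^ ℓ * bernPoly 2 ((ℓ : ℝ) / (2 * k)) =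
      1 / (4 * k) := by
  have hk0 : (k : ℝ) ≠ 0 := Nat.cast_ne_zero.mpr (by omega)
  have key : ∀ ℓ ∈ Finset.Icc 1 (2 * k), (-1 : ℝ) ^ ℓ * bernPoly 2 ((ℓ : ℝ) / (2 * k)) =
      ((-1 : ℝ) ^ ℓ * (ℓ : ℝ) ^ 2) * (1 / (4 * (k:ℝ) ^ 2)) -
        ((-1 : ℝ) ^ ℓ * (ℓ : ℝ)) * (1 / (2 * k)) + (-1 : ℝ) ^ ℓ * (1 / 6) := by
    intro ℓ _
    rw [bern2]
    field_simp
    ring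
  rw [Finset.sum_congr rfl key]
  rw [Finset.sum_add_distrib, Finset.sum_sub_distrib, ← Finset.sum_mul, ← Finset.sum_mul,
    ← Finset.sum_mul, alt_sum0, alt_sum1, alt_sum2]
  field_simp
  ring

lemma dvd_cases (h k : ℕ) (hk : 1 ≤ k) (hcop : Nat.Coprime h k) (ℓ : ℕ)
    (hmem : ℓ ∈ Finset.Icc 1 (2 * k)) (hc : ¬(ℓ = k ∨ ℓ = 2 * k)) :
    ¬∃ m : ℤ, ((h * ℓ : ℕ) : ℝ) / k = m := by
  rintro ⟨m, hm⟩
  have hk0 : (k : ℝ) ≠ 0 := Nat.cast_ne_zero.mpr (by omega)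
  have h1 : ((h * ℓ : ℕ) : ℝ) = m * k := (div_eq_iff hk0).mp hm
  have hz : ((h * ℓ : ℕ) : ℤ) = m * k := by exact_mod_cast h1
  have hdvd : (k : ℤ) ∣ ((h * ℓ : ℕ) : ℤ) := ⟨m, by rw [hz]; ring⟩
  have hdvd' : k ∣ h * ℓ := Int.natCast_dvd_natCast.mp hdvd
  have hkl : k ∣ ℓ := Nat.Coprime.dvd_of_dvd_mul_left hcop.symm hdvd'
  obtain ⟨c, rfl⟩ := hkl
  simp only [Finset.mem_Icc] at hmem
  have hc2 : c ≤ 2 := by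
    by_contra hc3
    push_neg at hc3
    have : k * 3 ≤ k * c := Nat.mul_le_mul_left k hc3
    omega
  interval_cases c <;> omega

lemma realside (h k : ℕ) (hk : 1 ≤ k) (hodd : Odd k) (hcop : Nat.Coprime h k) :
    ∑ ℓ ∈ Finset.Icc 1 (2 * k),
        (-1 : ℝ) ^ ℓ * bernPoly 2 ((ℓ : ℝ) / (2 * k)) *
          bernPoly 2 (Int.fract (((h * ℓ : ℕ) : ℝ) / k)) =
      (∑ ℓ ∈ Finset.Icc 1 (2 * k),
        (-1 : ℝ) ^ ℓ * saw (((h * ℓ : ℕ) : ℝ) / k) ^ 2 * bernPoly 2 ((ℓ : ℝ) / (2 * k)))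
        - (1/12) * (1 / (4 * k)) + 1/16 := by
  have hk0 : (k : ℝ) ≠ 0 := Nat.cast_ne_zero.mpr (by omega)
  have hkne : k ≠ 2 * k := by omega
  set g : ℕ → ℝ := fun ℓ => (-1 : ℝ) ^ ℓ * bernPoly 2 ((ℓ : ℝ) / (2 * k)) * (1/4) with hg
  have key : ∀ ℓ ∈ Finset.Icc 1 (2 * k),
      (-1 : ℝ) ^ ℓ * bernPoly 2 ((ℓ : ℝ) / (2 * k)) *
          bernPoly 2 (Int.fract (((h * ℓ : ℕ) : ℝ) / k)) =
        (-1 : ℝ) ^ ℓ * saw (((h * ℓ : ℕ) : ℝ) / k) ^ 2 * bernPoly 2 ((ℓ : ℝ) / (2 * k))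
          - (1/12) * ((-1 : ℝ) ^ ℓ * bernPoly 2 ((ℓ : ℝ) / (2 * k)))
          + (if ℓ = k ∨ ℓ = 2 * k then g ℓ else 0) := by
    intro ℓ hmem
    by_cases hc : ℓ = k ∨ ℓ = 2 * k
    · have hint : ∃ j : ℕ, ((h * ℓ : ℕ) : ℝ) / k = (j : ℝ) := by
        rcases hc with rfl | rfl
        · exact ⟨h, by push_cast; field_simp⟩
        · exact ⟨2 * h, by push_cast; field_simp⟩
      obtain ⟨j, hj⟩ := hint
      have hex : ∃ m : ℤ, ((h * ℓ : ℕ) : ℝ) / k = (m : ℝ) := ⟨j, by rw [hj]; push_cast; rfl⟩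
      have hsaw : saw (((h * ℓ : ℕ) : ℝ) / k) = 0 := by rw [saw, if_pos hex]
      have hfr : Int.fract (((h * ℓ : ℕ) : ℝ) / k) = 0 := by
        rw [hj, Int.fract_natCast]
      rw [hsaw, hfr, if_pos hc, hg]
      have : bernPoly 2 0 = 1/6 := by rw [bern2]; norm_num
      rw [this]
      ring
    · have hni := dvd_cases h k hk hcop ℓ hmem hc
      rw [if_neg hc, saw, if_neg hni, Int.fract, bern2, bern2]
      ring
  rw [Finset.sum_congr rfl key, Finset.sum_add_distrib, Finset.sum_sub_distrib,
    ← Finset.mul_sum, sumA k hk]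
  have split : ∀ ℓ ∈ Finset.Icc 1 (2 * k), (if ℓ = k ∨ ℓ = 2 * k then g ℓ else 0) =
      (if ℓ = k then g ℓ else 0) + (if ℓ = 2 * k then g ℓ else 0) := by
    intro ℓ _
    by_cases h1 : ℓ = k <;> by_cases h2 : ℓ = 2 * k <;> simp [h1, h2] <;> omega
  rw [Finset.sum_congr rfl split, Finset.sum_add_distrib, Finset.sum_ite_eq',
    Finset.sum_ite_eq', if_pos (by simp [Finset.mem_Icc]; omega),
    if_pos (by simp [Finset.mem_Icc]; omega)]
  have gk : g k = 1 / 48 := by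
    rw [hg]
    simp only
    rw [hodd.neg_one_pow, bern2, show (k : ℝ) / (2 * k) = 1/2 by field_simp]
    norm_num
  have g2k : g (2 * k) = 1 / 24 := by
    rw [hg]
    simp only
    have he : Even (2 * k) := ⟨k, by ring⟩
    rw [he.neg_one_pow, bern2, show ((2 * k : ℕ) : ℝ) / (2 * k) = 1 by push_cast; field_simp]
    norm_num
  rw [gk, g2k]
  ring


theorem stmt16 (h k : ℕ) (hk : 1 ≤ k) (hodd : Odd k) (hcop : Nat.Coprime h k) :
    (k : ℂ) * ∑ ℓ ∈ Finset.Icc 1 (2 * k),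
        (-1 : ℂ) ^ ℓ * (bernPoly 2 ((ℓ : ℝ) / (2 * k)) : ℂ) *
          Li2 (Complex.exp (2 * Real.pi * Complex.I * h * ℓ / k)) =
      (((3 * (k : ℝ) - 1) * Real.pi ^ 2 / 48 : ℝ) : ℂ) +
        ((Real.pi ^ 2 * (k : ℝ) * ∑ ℓ ∈ Finset.Icc 1 (2 * k),
            (-1 : ℝ) ^ ℓ * saw (((h * ℓ : ℕ) : ℝ) / k) ^ 2 *
              bernPoly 2 ((ℓ : ℝ) / (2 * k)) : ℝ) : ℂ) := by
  have hk0 : (k : ℝ) ≠ 0 := Nat.cast_ne_zero.mpr (by omega)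
  set A : ℕ → ℝ := fun ℓ => (-1 : ℝ) ^ ℓ * bernPoly 2 ((ℓ : ℝ) / (2 * k)) with hA
  set x : ℕ → ℝ := fun ℓ => ((h * ℓ : ℕ) : ℝ) / k with hx
  have step0 : ∀ ℓ ∈ Finset.Icc 1 (2 * k),
      (-1 : ℂ) ^ ℓ * ((bernPoly 2 ((ℓ : ℝ) / (2 * k)) : ℝ) : ℂ) *
        Li2 (Complex.exp (2 * Real.pi * Complex.I * h * ℓ / k)) =
      ((A ℓ : ℝ) : ℂ) * Li2 (Complex.exp (2 * Real.pi * Complex.I * ((x ℓ : ℝ) : ℂ))) := by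
    intro ℓ _
    have e : (2 * (Real.pi : ℂ) * Complex.I * h * ℓ / k) =
        2 * Real.pi * Complex.I * ((x ℓ : ℝ) : ℂ) := by
      simp only [hx]
      push_cast
      field_simp
    rw [e]
    simp only [hA]
    push_cast
    ring
  rw [Finset.sum_congr rfl step0]
  have claim1 : ∑ ℓ ∈ Finset.Icc 1 (2 * k),
        ((A ℓ : ℝ) : ℂ) * Li2 (Complex.exp (2 * Real.pi * Complex.I * ((x ℓ : ℝ) : ℂ))) =
      ∑ ℓ ∈ Finset.Icc 1 (2 * k),
        ((A ℓ : ℝ) : ℂ) * Li2 (Complex.exp (-(2 * Real.pi * Complex.I * ((x ℓ : ℝ) : ℂ)))) := by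
    have hins : Finset.Icc 1 (2 * k) = insert (2 * k) (Finset.Icc 1 (2 * k - 1)) := by
      ext a
      simp only [Finset.mem_Icc, Finset.mem_insert]
      omega
    have hnotmem : 2 * k ∉ Finset.Icc 1 (2 * k - 1) := by
      simp only [Finset.mem_Icc]
      omega
    rw [hins, Finset.sum_insert hnotmem, Finset.sum_insert hnotmem]
    have htop : x (2 * k) = 2 * (h : ℝ) := by
      simp only [hx]
      push_cast
      field_simp
    congr 1
    · rw [htop,
        show (2 * (Real.pi : ℂ) * Complex.I * ((2 * (h : ℝ) : ℝ) : ℂ)) =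
          ((2 * h : ℤ) : ℂ) * (2 * Real.pi * Complex.I) by push_cast; ring,
        Complex.exp_int_mul_two_pi_mul_I]
      rw [show (-(((2 * h : ℤ) : ℂ) * (2 * Real.pi * Complex.I))) =
          ((-(2 * h) : ℤ) : ℂ) * (2 * Real.pi * Complex.I) by push_cast; ring,
        Complex.exp_int_mul_two_pi_mul_I]
    · refine Finset.sum_nbij' (fun ℓ => 2 * k - ℓ) (fun ℓ => 2 * k - ℓ) ?_ ?_ ?_ ?_ ?_
      · intro a ha
        simp only [Finset.mem_Icc] at *
        omega
      · intro a ha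
        simp only [Finset.mem_Icc] at *
        omega
      · intro a ha
        simp only [Finset.mem_Icc] at ha
        show 2 * k - (2 * k - a) = a
        omega
      · intro a ha
        simp only [Finset.mem_Icc] at ha
        show 2 * k - (2 * k - a) = a
        omega
      · intro a ha
        simp only [Finset.mem_Icc] at ha
        have hle : a ≤ 2 * k := by omega
        have hcast : ((2 * k - a : ℕ) : ℝ) = 2 * (k : ℝ) - a := by
          rw [Nat.cast_sub hle]
          push_cast
          ring
        have hAe : A (2 * k - a) = A a := by
          simp only [hA]
          have hpow : (-1 : ℝ) ^ (2 * k - a) = (-1 : ℝ) ^ a := by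
            rcases Nat.even_or_odd a with ha2 | ha2
            · have he : Even (2 * k - a) := by
                rcases ha2 with ⟨t, rfl⟩
                exact ⟨k - t, by omega⟩
              rw [he.neg_one_pow, ha2.neg_one_pow]
            · have ho : Odd (2 * k - a) := by
                rcases ha2 with ⟨t, rfl⟩
                exact ⟨k - t - 1, by omega⟩
              rw [ho.neg_one_pow, ha2.neg_one_pow]
          rw [hpow, bern2, bern2, hcast]
          field_simp
          ring
        have hxe : x (2 * k - a) = 2 * (h : ℝ) - x a := by
          simp only [hx]
          have hc2 : ((h * (2 * k - a) : ℕ) : ℝ) = (h : ℝ) * (2 * (k : ℝ) - a) := by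
            rw [Nat.cast_mul, Nat.cast_sub hle]
            push_cast
            ring
          rw [hc2]
          field_simp
          push_cast
          ring
        have hexp : Complex.exp (-(2 * Real.pi * Complex.I * ((x (2 * k - a) : ℝ) : ℂ))) =
            Complex.exp (2 * Real.pi * Complex.I * ((x a : ℝ) : ℂ)) := by
          rw [hxe,
            show (-(2 * (Real.pi : ℂ) * Complex.I * ((2 * (h : ℝ) - x a : ℝ) : ℂ))) =
              2 * Real.pi * Complex.I * ((x a : ℝ) : ℂ) +
                ((-(2 * h) : ℤ) : ℂ) * (2 * Real.pi * Complex.I) by push_cast; ring,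
            Complex.exp_add, Complex.exp_int_mul_two_pi_mul_I, mul_one]
        rw [hAe, hexp]
  have hTT : (∑ ℓ ∈ Finset.Icc 1 (2 * k),
        ((A ℓ : ℝ) : ℂ) * Li2 (Complex.exp (2 * Real.pi * Complex.I * ((x ℓ : ℝ) : ℂ)))) =
      (((∑ ℓ ∈ Finset.Icc 1 (2 * k),
        A ℓ * (π ^ 2 * bernPoly 2 (Int.fract (x ℓ)))) : ℝ) : ℂ) := by
    have h2 : (∑ ℓ ∈ Finset.Icc 1 (2 * k),
          ((A ℓ : ℝ) : ℂ) * Li2 (Complex.exp (2 * Real.pi * Complex.I * ((x ℓ : ℝ) : ℂ)))) +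
        (∑ ℓ ∈ Finset.Icc 1 (2 * k),
          ((A ℓ : ℝ) : ℂ) * Li2 (Complex.exp (2 * Real.pi * Complex.I * ((x ℓ : ℝ) : ℂ)))) =
        (2 : ℂ) * (((∑ ℓ ∈ Finset.Icc 1 (2 * k),
          A ℓ * (π ^ 2 * bernPoly 2 (Int.fract (x ℓ)))) : ℝ) : ℂ) := by
      nth_rewrite 2 [claim1]
      rw [← Finset.sum_add_distrib, Complex.ofReal_sum, Finset.mul_sum]
      refine Finset.sum_congr rfl fun ℓ _ => ?_
      rw [← mul_add, li2_add_li2 (x ℓ)]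
      push_cast
      ring
    rw [← two_mul] at h2
    exact mul_left_cancel₀ two_ne_zero h2
  rw [hTT, ← Complex.ofReal_natCast k, ← Complex.ofReal_mul, ← Complex.ofReal_add,
    Complex.ofReal_inj]
  have hSig : (∑ ℓ ∈ Finset.Icc 1 (2 * k), A ℓ * (π ^ 2 * bernPoly 2 (Int.fract (x ℓ)))) =
      π ^ 2 * ∑ ℓ ∈ Finset.Icc 1 (2 * k),
        (-1 : ℝ) ^ ℓ * bernPoly 2 ((ℓ : ℝ) / (2 * k)) *
          bernPoly 2 (Int.fract (((h * ℓ : ℕ) : ℝ) / k)) := by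
    rw [Finset.mul_sum]
    refine Finset.sum_congr rfl fun ℓ _ => ?_
    simp only [hA, hx]
    ring
  rw [hSig, realside h k hk hodd hcop]
  field_simp
  ring
end
end
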